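/- arXiv:2510.07237 — 6 statements merged into one kernel-verified Lean document; each statement's English description precedes it below -/
import Mathlib

section
/- Let c be a recurrence vector with c_k = 1 and let (X_n)_{n∈Z} be the c-recurrence vector sequence in Z^{k-1}. Define, for n ≥ k-2, the map S_n : Z^{k-1} → Z/(X_n) by S_n(v) = v · (X_{n-1}^s, ..., X_{n-k+1}^s) mod X_n^s, where (X_n^s) is the scalar PLRS with the same recurrence coefficients. Then for all 1 ≤ i ≤ n-1, S_n(X_{-i}) = X_{n-i}^s mod X_n^s. -/
/-- The scalar product `S_n(v) = v · (X^s_{n-1}, …, X^s_{n-k+1}) (mod X^s_n)`. -/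
def Sdot (k n : ℕ) (Xs : ℕ → ℤ) (v : Fin (k - 1) → ℤ) : ℤ :=
  ∑ j : Fin (k - 1), v j * Xs (n - 1 - (j : ℕ))

lemma sum_modEq_aux {N : ℤ} {s : Finset ℕ} {f g : ℕ → ℤ}
    (h : ∀ x ∈ s, Int.ModEq N (f x) (g x)) :
    Int.ModEq N (∑ x ∈ s, f x) (∑ x ∈ s, g x) := by
  classical
  induction s using Finset.induction_on with
  | empty => simp
  | @insert a s ha ih =>
    rw [Finset.sum_insert ha, Finset.sum_insert ha]
    exact (h a (Finset.mem_insert_self a s)).add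
      (ih fun x hx => h x (Finset.mem_insert_of_mem hx))

/-- `S_n(X_{-i}) ≡ X^s_{n-i} (mod X^s_n)` for `1 ≤ i ≤ n - 1`. -/
theorem Sn_on_basis
    (k : ℕ) (hk : 2 ≤ k) (c : ℕ → ℤ)
    (hc1 : 0 < c 1) (hcnn : ∀ i, 2 ≤ i → i ≤ k - 1 → 0 ≤ c i) (hck : c k = 1)
    (Xs : ℕ → ℤ) (hXs1 : Xs 1 = 1)
    (hXsinit : ∀ n, 2 ≤ n → n ≤ k →
      Xs n = (∑ i ∈ Finset.Icc 1 (n - 1), c i * Xs (n - i)) + 1)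
    (hXsrec : ∀ n, k < n → Xs n = ∑ i ∈ Finset.Icc 1 k, c i * Xs (n - i))
    (V : ℤ → Fin (k - 1) → ℤ)
    (hV0 : V 0 = 0)
    (hVe : ∀ i : ℕ, 1 ≤ i → i ≤ k - 1 →
      V (-(i : ℤ)) = fun j : Fin (k - 1) => if (j : ℕ) + 1 = i then 1 else 0)
    (hVrec : ∀ n : ℤ, V n = ∑ l ∈ Finset.Icc 1 k, c l • V (n - (l : ℤ)))
    (n : ℕ) (hn : k - 2 ≤ n) :
    ∀ i : ℕ, 1 ≤ i → i ≤ n - 1 →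
      Int.ModEq (Xs n) (Sdot k n Xs (V (-(i : ℤ)))) (Xs (n - i)) := by
  -- linearity of Sdot along the recurrence
  have hf : ∀ m : ℤ, Sdot k n Xs (V m)
      = ∑ l ∈ Finset.Icc 1 k, c l * Sdot k n Xs (V (m - (l : ℤ))) := by
    intro m
    conv_lhs => rw [hVrec m]
    unfold Sdot
    simp only [Finset.sum_apply, Pi.smul_apply, smul_eq_mul, Finset.sum_mul,
      Finset.mul_sum, mul_assoc]
    rw [Finset.sum_comm]
  have hIcc : Finset.Icc 1 k = insert k (Finset.Icc 1 (k - 1)) := by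
    ext x; simp [Finset.mem_Icc, Finset.mem_insert]; omega
  have hknot : k ∉ Finset.Icc 1 (k - 1) := by simp; omega
  have hsplit : ∀ m : ℤ, Sdot k n Xs (V (m - (k : ℤ)))
      = Sdot k n Xs (V m)
        - ∑ l ∈ Finset.Icc 1 (k - 1), c l * Sdot k n Xs (V (m - (l : ℤ))) := by
    intro m
    have h := hf m
    rw [hIcc, Finset.sum_insert hknot, hck, one_mul] at h
    linarith
  -- main claim by strong induction, including i = 0
  have main : ∀ i : ℕ, i ≤ n - 1 →
      Int.ModEq (Xs n) (Sdot k n Xs (V (-(i : ℤ)))) (Xs (n - i)) := by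
    intro i
    induction i using Nat.strong_induction_on with
    | _ i IH =>
      intro hin
      rcases Nat.eq_zero_or_pos i with h0 | hi1
      · subst h0
        simp only [Nat.cast_zero, neg_zero, hV0, Nat.sub_zero]
        have : Sdot k n Xs 0 = 0 := by simp [Sdot]
        rw [this]
        exact (Int.modEq_zero_iff_dvd.mpr dvd_rfl).symm
      rcases le_or_gt i (k - 1) with hik | hik
      · -- base case
        rw [hVe i hi1 hik]
        have hlt : i - 1 < k - 1 := by omega
        have : (∑ j : Fin (k - 1),
            (if (j : ℕ) + 1 = i then (1 : ℤ) else 0) * Xs (n - 1 - (j : ℕ)))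
            = Xs (n - i) := by
          rw [Fintype.sum_eq_single (⟨i - 1, hlt⟩ : Fin (k - 1))]
          · simp only
            rw [if_pos (by omega), one_mul]
            congr 1; omega
          · intro j hj
            rw [if_neg, zero_mul]
            intro h
            apply hj
            apply Fin.ext
            simp; omega
        rw [show Sdot k n Xs (fun j : Fin (k-1) => if (j : ℕ) + 1 = i then 1 else 0)
            = _ from rfl] at *
        unfold Sdot
        rw [this]
      · -- inductive step, i ≥ k
        have hki : k ≤ i := by omega
        have hcast : -(i : ℤ) = -((i - k : ℕ) : ℤ) - (k : ℤ) := by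
          push_cast [Nat.cast_sub hki]; ring
        rw [hcast, hsplit]
        have h1 : Int.ModEq (Xs n) (Sdot k n Xs (V (-((i - k : ℕ) : ℤ))))
            (Xs (n - (i - k))) := IH (i - k) (by omega) (by omega)
        have h2 : ∀ l ∈ Finset.Icc 1 (k - 1),
            Int.ModEq (Xs n)
              (c l * Sdot k n Xs (V (-((i - k : ℕ) : ℤ) - (l : ℤ))))
              (c l * Xs (n - (i - k + l))) := by
          intro l hl
          simp only [Finset.mem_Icc] at hl
          have : -((i - k : ℕ) : ℤ) - (l : ℤ) = -(((i - k + l : ℕ)) : ℤ) := by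
            push_cast; ring
          rw [this]
          exact (IH (i - k + l) (by omega) (by omega)).mul_left _
        have hsum : Int.ModEq (Xs n)
            (∑ l ∈ Finset.Icc 1 (k - 1),
              c l * Sdot k n Xs (V (-((i - k : ℕ) : ℤ) - (l : ℤ))))
            (∑ l ∈ Finset.Icc 1 (k - 1), c l * Xs (n - (i - k + l))) :=
          sum_modEq_aux h2
        have htarget : Xs (n - (i - k))
            - ∑ l ∈ Finset.Icc 1 (k - 1), c l * Xs (n - (i - k + l))
            = Xs (n - i) := by
          have hN : k < n - i + k := by omega
          have h := hXsrec (n - i + k) hN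
          rw [hIcc, Finset.sum_insert hknot, hck, one_mul] at h
          have e0 : n - (i - k) = n - i + k := by omega
          have e1 : n - i + k - k = n - i := by omega
          have e2 : ∀ l ∈ Finset.Icc 1 (k - 1),
              c l * Xs (n - (i - k + l)) = c l * Xs (n - i + k - l) := by
            intro l hl
            simp only [Finset.mem_Icc] at hl
            congr 2; omega
          rw [e1] at h
          rw [e0, Finset.sum_congr rfl e2]
          linarith
        calc Sdot k n Xs (V (-((i - k : ℕ) : ℤ)))
              - ∑ l ∈ Finset.Icc 1 (k - 1),
                c l * Sdot k n Xs (V (-((i - k : ℕ) : ℤ) - (l : ℤ)))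
            ≡ Xs (n - (i - k))
              - ∑ l ∈ Finset.Icc 1 (k - 1), c l * Xs (n - (i - k + l))
              [ZMOD (Xs n)] := h1.sub hsum
          _ = Xs (n - i) := htarget
  intro i _ hin
  exact main i hin
end

section
/- Let c = (c_1, ..., c_k) with c_1 > 0, c_i ≥ 0, c_k = 1, and let z be the maximum number of consecutive zeroes in (c_1, ..., c_{k-1}). Then the vectors X_{-1}, X_{-2}, ..., X_{-(k+z)} of the c-recurrence vector sequence span Z^{k-1} over the nonnegative integers: every v ∈ Z^{k-1} can be written as v = Σ_{n=1}^{k+z} a_n X_{-n} with each a_n a nonnegative integer. -/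
/-- If z is the maximum number of consecutive zeroes among c_1, …, c_{k-1}, then the
vectors X_{-1}, …, X_{-(k+z)} span ℤ^{k-1} over the nonnegative integers. -/
theorem crec_vectors_span
    (k : ℕ) (hk : 2 ≤ k) (c : ℕ → ℤ)
    (hc1 : 0 < c 1) (hcnn : ∀ i, 2 ≤ i → i ≤ k - 1 → 0 ≤ c i) (hck : c k = 1)
    (V : ℤ → Fin (k - 1) → ℤ)
    (hV0 : V 0 = 0)
    (hVe : ∀ i : ℕ, 1 ≤ i → i ≤ k - 1 →
      V (-(i : ℤ)) = fun j : Fin (k - 1) => if (j : ℕ) + 1 = i then 1 else 0)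
    (hVrec : ∀ n : ℤ, V n = ∑ l ∈ Finset.Icc 1 k, c l • V (n - (l : ℤ)))
    (z : ℕ)
    (hzub : ∀ i l : ℕ, 1 ≤ i → i + l ≤ k →
      (∀ j, i ≤ j → j < i + l → c j = 0) → l ≤ z)
    (hzex : z = 0 ∨ ∃ i : ℕ, 1 ≤ i ∧ i + z ≤ k ∧ ∀ j, i ≤ j → j < i + z → c j = 0) :
    ∀ v : Fin (k - 1) → ℤ, ∃ a : ℕ → ℕ,
      v = ∑ n ∈ Finset.Icc 1 (k + z), (a n : ℤ) • V (-(n : ℤ)) := by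
  set P : (Fin (k - 1) → ℤ) → Prop :=
    fun w => ∃ a : ℕ → ℕ, w = ∑ n ∈ Finset.Icc 1 (k + z), (a n : ℤ) • V (-(n : ℤ)) with hP
  have P0 : P 0 := ⟨fun _ => 0, by simp⟩
  have Padd : ∀ u w, P u → P w → P (u + w) := by
    rintro u w ⟨a, ha⟩ ⟨b, hb⟩
    refine ⟨fun n => a n + b n, ?_⟩
    rw [ha, hb, ← Finset.sum_add_distrib]
    refine Finset.sum_congr rfl fun n _ => ?_
    push_cast
    rw [add_smul]
  have Pgen : ∀ n : ℕ, 1 ≤ n → n ≤ k + z → P (V (-(n : ℤ))) := by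
    intro n h1 h2
    refine ⟨fun m => if m = n then 1 else 0, ?_⟩
    rw [Finset.sum_eq_single n (fun b _ hb => by simp [hb])
      (fun h => absurd (Finset.mem_Icc.mpr ⟨h1, h2⟩) h)]
    simp
  have Psmul : ∀ q : ℤ, 0 ≤ q → ∀ w, P w → P (q • w) := by
    rintro q hq w ⟨a, ha⟩
    refine ⟨fun n => q.toNat * a n, ?_⟩
    rw [ha, Finset.smul_sum]
    refine Finset.sum_congr rfl fun n _ => ?_
    rw [smul_smul]
    congr 1
    push_cast [Int.toNat_of_nonneg hq]
    ring
  have Psum : ∀ {α : Type} (s : Finset α) (f : α → Fin (k - 1) → ℤ),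
      (∀ l ∈ s, P (f l)) → P (∑ l ∈ s, f l) := by
    intro α s f
    induction s using Finset.cons_induction_on with
    | empty => intro _; simpa using P0
    | cons _ _ ha ih =>
      intro hf
      rw [Finset.sum_cons]
      exact Padd _ _ (hf _ (Finset.mem_cons_self _ _))
        (ih fun l hl => hf l (Finset.mem_cons_of_mem hl))
  have hrec : ∀ m : ℕ, V (-((m + k : ℕ) : ℤ)) =
      V (-(m : ℤ)) - ∑ l ∈ Finset.Icc 1 (k - 1), c l • V (-((m + l : ℕ) : ℤ)) := by
    intro m
    have h := hVrec (-(m : ℤ))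
    have hks : k - 1 + 1 = k := by omega
    have hsplit := Finset.sum_Icc_succ_top (a := 1) (b := k - 1) (by omega)
      (fun l => c l • V (-(m : ℤ) - (l : ℤ)))
    rw [hks] at hsplit
    rw [hsplit] at h
    simp only [hck, one_smul] at h
    have e1 : V (-(m : ℤ) - (k : ℤ)) = V (-((m + k : ℕ) : ℤ)) := by
      congr 1; push_cast; ring
    rw [e1] at h
    have h2 : V (-((m + k : ℕ) : ℤ)) =
        V (-(m : ℤ)) - ∑ l ∈ Finset.Icc 1 (k - 1), c l • V (-(m : ℤ) - (l : ℤ)) := by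
      rw [h]; abel
    rw [h2]
    congr 1
    refine Finset.sum_congr rfl fun l _ => ?_
    congr 2
    push_cast; ring
  have hcpos : ∀ l : ℕ, 1 ≤ l → l ≤ k - 1 → 0 ≤ c l := by
    intro l hl1 hl2
    rcases Nat.eq_or_lt_of_le hl1 with h | h
    · exact le_of_lt (h ▸ hc1)
    · exact hcnn l h hl2
  have Pneg : ∀ i : ℕ, 1 ≤ i → i ≤ k - 1 → P (-(V (-(i : ℤ)))) := by
    intro i
    induction i using Nat.strong_induction_on with
    | _ i ih =>
    intro h1 h2
    obtain ⟨m, hmz, hmi, hcm⟩ : ∃ m : ℕ, m ≤ z ∧ m < i ∧ 0 < c (i - m) := by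
      by_cases hiz : i - 1 ≤ z
      · refine ⟨i - 1, hiz, by omega, ?_⟩
        have he : i - (i - 1) = 1 := by omega
        rw [he]; exact hc1
      · by_contra hcon
        push_neg at hcon
        have hall : ∀ j, i - z ≤ j → j < (i - z) + (z + 1) → c j = 0 := by
          intro j hj1 hj2
          have hj2' : j ≤ i := by omega
          have hle := hcon (i - j) (by omega) (by omega)
          have hij : i - (i - j) = j := by omega
          rw [hij] at hle
          have h0 : 0 ≤ c j := hcpos j (by omega) (by omega)
          omega
        have := hzub (i - z) (z + 1) (by omega) (by omega) hall
        omega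
    set l₀ := i - m with hl₀
    have hl₀mem : l₀ ∈ Finset.Icc 1 (k - 1) := Finset.mem_Icc.mpr ⟨by omega, by omega⟩
    have hml₀ : m + l₀ = i := by omega
    have hsum : ∑ l ∈ Finset.Icc 1 (k - 1), c l • V (-((m + l : ℕ) : ℤ))
        = c l₀ • V (-(i : ℤ)) +
          ∑ l ∈ (Finset.Icc 1 (k - 1)).erase l₀, c l • V (-((m + l : ℕ) : ℤ)) := by
      rw [← Finset.add_sum_erase _ _ hl₀mem, hml₀]
    have key : c l₀ • (-(V (-(i : ℤ)))) =
        V (-((m + k : ℕ) : ℤ)) + (-(V (-(m : ℤ)))) +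
        ∑ l ∈ (Finset.Icc 1 (k - 1)).erase l₀, c l • V (-((m + l : ℕ) : ℤ)) := by
      rw [smul_neg, hrec m, hsum]
      generalize c l₀ • V (-(i : ℤ)) = w
      abel
    have hP1 : P (V (-((m + k : ℕ) : ℤ))) := Pgen (m + k) (by omega) (by omega)
    have hP2 : P (-(V (-(m : ℤ)))) := by
      rcases Nat.eq_zero_or_pos m with hm0 | hm0
      · subst hm0
        simp only [Nat.cast_zero, neg_zero, hV0]
        simpa using P0
      · exact ih m hmi hm0 (by omega)
    have hP3 : P (∑ l ∈ (Finset.Icc 1 (k - 1)).erase l₀, c l • V (-((m + l : ℕ) : ℤ))) := by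
      refine Psum _ _ fun l hl => ?_
      have hl' := Finset.mem_Icc.mp (Finset.mem_of_mem_erase hl)
      exact Psmul (c l) (hcpos l hl'.1 hl'.2) _ (Pgen (m + l) (by omega) (by omega))
    have hPc : P (c l₀ • (-(V (-(i : ℤ))))) := by
      rw [key]; exact Padd _ _ (Padd _ _ hP1 hP2) hP3
    have hfin : -(V (-(i : ℤ))) = c l₀ • (-(V (-(i : ℤ)))) + (c l₀ - 1) • V (-(i : ℤ)) := by
      rw [smul_neg, sub_smul, one_smul]
      generalize c l₀ • V (-(i : ℤ)) = w
      abel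
    rw [hfin]
    exact Padd _ _ hPc (Psmul (c l₀ - 1) (by omega) _ (Pgen i h1 (by omega)))
  intro v
  have hbasis : ∀ j : Fin (k - 1), V (-(((j : ℕ) + 1 : ℕ) : ℤ)) = Pi.single j 1 := by
    intro j
    have hj := j.isLt
    rw [hVe ((j : ℕ) + 1) (by omega) (by omega)]
    funext j'
    simp only [Pi.single_apply]
    by_cases h : j' = j
    · subst h; simp
    · have h2 : ¬((j' : ℕ) + 1 = (j : ℕ) + 1) := fun hh => h (Fin.ext (by omega))
      simp [h, h2, Fin.val_inj]
  have hv : v = ∑ j : Fin (k - 1), v j • V (-(((j : ℕ) + 1 : ℕ) : ℤ)) := by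
    funext j'
    rw [Finset.sum_apply]
    simp only [hbasis, Pi.smul_apply, Pi.single_apply, smul_eq_mul]
    rw [Finset.sum_eq_single j' (fun b _ hb => by simp [Ne.symm hb])
      (fun h => absurd (Finset.mem_univ j') h)]
    simp
  have hfinal : P (∑ j : Fin (k - 1), v j • V (-(((j : ℕ) + 1 : ℕ) : ℤ))) := by
    refine Psum _ _ fun j _ => ?_
    have hj := j.isLt
    rcases le_or_gt 0 (v j) with hvj | hvj
    · exact Psmul (v j) hvj _ (Pgen ((j : ℕ) + 1) (by omega) (by omega))
    · have he : v j • V (-(((j : ℕ) + 1 : ℕ) : ℤ))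
          = (-(v j)) • (-(V (-(((j : ℕ) + 1 : ℕ) : ℤ)))) := by
        rw [smul_neg, neg_smul, neg_neg]
      rw [he]
      exact Psmul (-(v j)) (by omega) _ (Pneg ((j : ℕ) + 1) (by omega) (by omega))
  rw [hP] at hfinal
  obtain ⟨a, ha⟩ := hfinal
  exact ⟨a, by rw [hv]; exact ha⟩
end

section
/- Let c = (c_1, ..., c_k) with c_j = 0 being a p-th consecutive zero (i.e., c_{j-1} = ... = c_{j-p+1} = 0 but c_{j-p} ≠ 0), where 1 ≤ p. Then the j-th entry of each vector X_{-k}, X_{-k-1}, ..., X_{-k-p+1} is zero, and the j-th entry of X_{-k-p} equals -c_{j-p}, which is negative. -/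
/-- If c_j = 0 is a p-th consecutive zero (c_{j-1} = ⋯ = c_{j-p+1} = 0, c_{j-p} ≠ 0),
then the j-th entry of X_{-k}, …, X_{-k-p+1} is zero, and the j-th entry of
X_{-k-p} is -c_{j-p}, which is negative. -/
theorem crec_vector_entry_consecutive_zeros
    (k : ℕ) (hk : 2 ≤ k) (c : ℕ → ℤ)
    (hc1 : 0 < c 1) (hcnn : ∀ i, 1 ≤ i → i ≤ k - 1 → 0 ≤ c i) (hck : c k = 1)
    (V : ℤ → Fin (k - 1) → ℤ)
    (hV0 : V 0 = 0)
    (hVe : ∀ i : ℕ, 1 ≤ i → i ≤ k - 1 →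
      V (-(i : ℤ)) = fun j : Fin (k - 1) => if (j : ℕ) + 1 = i then 1 else 0)
    (hVrec : ∀ n : ℤ, V n = ∑ l ∈ Finset.Icc 1 k, c l • V (n - (l : ℤ)))
    (j p : ℕ) (hj1 : 1 ≤ j) (hj2 : j ≤ k - 1) (hp : 1 ≤ p) (hpj : p < j)
    (hcj : c j = 0)
    (hzeros : ∀ q, 1 ≤ q → q ≤ p - 1 → c (j - q) = 0)
    (hcjp : c (j - p) ≠ 0) :
    (∀ q : ℕ, q ≤ p - 1 → V (-(k : ℤ) - (q : ℤ)) ⟨j - 1, by omega⟩ = 0) ∧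
    V (-(k : ℤ) - (p : ℤ)) ⟨j - 1, by omega⟩ = -c (j - p) ∧
    V (-(k : ℤ) - (p : ℤ)) ⟨j - 1, by omega⟩ < 0 := by
  have hjF : j - 1 < k - 1 := by omega
  set jF : Fin (k - 1) := ⟨j - 1, hjF⟩ with hjFdef
  have key : ∀ q : ℕ, q ≤ p → V (-(k : ℤ) - (q : ℤ)) jF = -c (j - q) := by
    intro q
    induction q using Nat.strong_induction_on with
    | _ q IH =>
      intro hqp
      have hrec := congrFun (hVrec (-(q : ℤ))) jF
      rw [Finset.sum_apply] at hrec
      have hkmem : k ∈ Finset.Icc 1 k := by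
        simp only [Finset.mem_Icc]; omega
      rw [← Finset.sum_erase_add _ _ hkmem] at hrec
      have herase : (Finset.Icc 1 k).erase k = Finset.Icc 1 (k - 1) := by
        rw [Finset.Icc_erase_right, ← Finset.Ico_add_one_right_eq_Icc]
        congr 1; omega
      rw [herase] at hrec
      -- left side is 0
      have hL : V (-(q : ℤ)) jF = 0 := by
        rcases Nat.eq_zero_or_pos q with h0 | h1
        · subst h0; simp [hV0]
        · rw [hVe q h1 (by omega)]
          simp only [hjFdef]
          rw [if_neg (by omega)]
      -- the top term
      have hkterm : (c k • V (-(q : ℤ) - (k : ℤ))) jF = V (-(k : ℤ) - (q : ℤ)) jF := by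
        rw [Pi.smul_apply, hck, one_smul]
        congr 1; ring
      rw [hL, hkterm] at hrec
      -- the sum
      have hsum : ∀ l ∈ Finset.Icc 1 (k - 1),
          (c l • V (-(q : ℤ) - (l : ℤ))) jF = if l = j - q then c (j - q) else 0 := by
        intro l hl
        simp only [Finset.mem_Icc] at hl
        rw [Pi.smul_apply, smul_eq_mul]
        by_cases hcase : q + l ≤ k - 1
        · have hargs : -(q : ℤ) - (l : ℤ) = -((q + l : ℕ) : ℤ) := by push_cast; ring
          rw [hargs, hVe (q + l) (by omega) hcase]
          simp only [hjFdef]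
          by_cases h2 : l = j - q
          · rw [if_pos (by omega), if_pos h2, mul_one, h2]
          · rw [if_neg (by omega), if_neg h2, mul_zero]
        · have hargs : -(q : ℤ) - (l : ℤ) = -(k : ℤ) - ((q + l - k : ℕ) : ℤ) := by omega
          rw [hargs, IH (q + l - k) (by omega) (by omega)]
          have hz : c (j - (q + l - k)) = 0 := by
            rcases Nat.eq_zero_or_pos (q + l - k) with h0 | h1
            · rw [h0]; simpa using hcj
            · exact hzeros _ h1 (by omega)
          rw [hz, if_neg (by omega)]
          ring
      rw [Finset.sum_congr rfl hsum, Finset.sum_ite_eq' (Finset.Icc 1 (k - 1)) (j - q)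
        (fun _ => c (j - q)), if_pos (by simp only [Finset.mem_Icc]; omega)] at hrec
      linarith
  have hpos : 0 < c (j - p) := by
    rcases lt_or_eq_of_le (hcnn (j - p) (by omega) (by omega)) with h | h
    · exact h
    · exact absurd h.symm hcjp
  refine ⟨fun q hq => ?_, key p le_rfl, by rw [key p le_rfl]; omega⟩
  rw [key q (by omega)]
  rcases Nat.eq_zero_or_pos q with h0 | h1
  · rw [h0]; simpa using hcj
  · rw [hzeros q h1 hq]; ring
end

section
/- Let c = (c_1, ..., c_k) be weakly decreasing with c_k = 1, and suppose a = (a_n) is a c-nearly satisfying representation of a vector v ∈ Z^{k-1}. Then a can be transformed into a c-satisfying representation of v by a finite number of borrowing and carrying operations. -/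
/-- `IsSR k c a` : the (1-indexed) sequence `a` is a c-satisfying representation string,
i.e. it decomposes, reading left to right, into blocks
`c_1, …, c_{s-1}, (digit < c_s), 0, …, 0`, possibly ending with a truncated block
equal to a proper initial segment of `c`. -/
inductive IsSR (k : ℕ) (c : ℕ → ℤ) : (ℕ → ℕ) → Prop where
  | zero (a : ℕ → ℕ) (h : ∀ n, 1 ≤ n → a n = 0) : IsSR k c a
  | cprefix (a : ℕ → ℕ) (m : ℕ) (h1 : 1 ≤ m) (h2 : m < k)
      (h3 : ∀ n, 1 ≤ n → n ≤ m → (a n : ℤ) = c n)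
      (h4 : ∀ n, m < n → a n = 0) : IsSR k c a
  | chunk (a : ℕ → ℕ) (s ℓ : ℕ) (hs1 : 1 ≤ s) (hs2 : s ≤ k)
      (h1 : ∀ n, 1 ≤ n → n < s → (a n : ℤ) = c n)
      (h2 : (a s : ℤ) < c s)
      (h3 : ∀ i, 1 ≤ i → i ≤ ℓ → a (s + i) = 0)
      (h4 : IsSR k c (fun n => a (s + ℓ + n))) : IsSR k c a

/-- Carrying into index `i`: increment `a_i` by 1 and decrement `a_{i+l}` by `c_l`
for `1 ≤ l ≤ k` (only allowed when all resulting entries stay nonnegative). -/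
def CarryOp (k : ℕ) (c : ℕ → ℤ) (i : ℕ) (a b : ℕ → ℕ) : Prop :=
  b i = a i + 1 ∧
  (∀ l, 1 ≤ l → l ≤ k → (b (i + l) : ℤ) = (a (i + l) : ℤ) - c l) ∧
  (∀ n, n < i ∨ i + k < n → b n = a n)

/-- Borrowing from index `i`: decrement `a_i` by 1 and increment `a_{i+l}` by `c_l`
for `1 ≤ l ≤ k` (only allowed when `a_i ≥ 1`). -/
def BorrowOp (k : ℕ) (c : ℕ → ℤ) (i : ℕ) (a b : ℕ → ℕ) : Prop :=
  a i = b i + 1 ∧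
  (∀ l, 1 ≤ l → l ≤ k → (b (i + l) : ℤ) = (a (i + l) : ℤ) + c l) ∧
  (∀ n, n < i ∨ i + k < n → b n = a n)

namespace CNSR

/-- support bound -/
def Bdd (T : ℕ) (x : ℕ → ℕ) : Prop := ∀ n, T < n → x n = 0

def Stp (k : ℕ) (c : ℕ → ℤ) (x y : ℕ → ℕ) : Prop :=
  ∃ i, CarryOp k c i x y ∨ BorrowOp k c i x y

abbrev Reach (k : ℕ) (c : ℕ → ℤ) : (ℕ → ℕ) → (ℕ → ℕ) → Prop :=
  Relation.ReflTransGen (Stp k c)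

/-- pattern A : a full c-block sits at positions i+1..i+k -/
def PatA (k : ℕ) (c : ℕ → ℤ) (x : ℕ → ℕ) (i : ℕ) : Prop :=
  ∀ l, 1 ≤ l → l ≤ k → (x (i + l) : ℤ) = c l

/-- pattern B : a c-prefix with a strict surplus at position i+s -/
def PatB (k : ℕ) (c : ℕ → ℤ) (x : ℕ → ℕ) (i s : ℕ) : Prop :=
  1 ≤ s ∧ s ≤ k ∧ (∀ l, 1 ≤ l → l < s → (x (i + l) : ℤ) = c l) ∧
    c s < (x (i + s) : ℤ)

def impA (k i : ℕ) (x : ℕ → ℕ) : ℕ → ℕ := fun n =>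
  if n = i then x n + 1 else if i + 1 ≤ n ∧ n ≤ i + k then 0 else x n

def impBz (k : ℕ) (c : ℕ → ℤ) (i s : ℕ) (x : ℕ → ℕ) : ℕ → ℕ := fun n =>
  if i + s + 1 ≤ n ∧ n ≤ i + s + k then x n + (c (n - (i + s))).toNat
  else if n = i + s then x n - 1 else x n

def impB (k : ℕ) (c : ℕ → ℤ) (i s : ℕ) (x : ℕ → ℕ) : ℕ → ℕ := fun n =>
  if n = i then impBz k c i s x n + 1
  else if i + 1 ≤ n ∧ n ≤ i + k then ((impBz k c i s x n : ℤ) - c (n - i)).toNat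
  else impBz k c i s x n

def Imp (k : ℕ) (c : ℕ → ℤ) (x y : ℕ → ℕ) (i s : ℕ) : Prop :=
  (PatA k c x i ∧ y = impA k i x) ∨ (PatB k c x i s ∧ y = impB k c i s x)

section Basic
variable {k : ℕ} {c : ℕ → ℤ} {x y : ℕ → ℕ} {i s T : ℕ}

theorem hc_one (hdec : ∀ i, 1 ≤ i → i < k → c (i + 1) ≤ c i) (hck : c k = 1) :
    ∀ l, 1 ≤ l → l ≤ k → 1 ≤ c l := by
  have key : ∀ d l, 1 ≤ l → l + d = k → 1 ≤ c l := by
    intro d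
    induction d with
    | zero => intro l h1 h2; simp only [Nat.add_zero] at h2; subst h2; rw [hck]
    | succ d ih =>
      intro l h1 h2
      have h3 : c (l + 1) ≤ c l := hdec l h1 (by omega)
      have h4 : 1 ≤ c (l + 1) := ih (l + 1) (by omega) (by omega)
      linarith
  intro l h1 h2
  exact key (k - l) l h1 (by omega)

theorem hc_mono (hdec : ∀ i, 1 ≤ i → i < k → c (i + 1) ≤ c i) :
    ∀ p q, 1 ≤ p → p ≤ q → q ≤ k → c q ≤ c p := by
  have key : ∀ d p, 1 ≤ p → p + d ≤ k → c (p + d) ≤ c p := by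
    intro d
    induction d with
    | zero => intro p _ _; simp
    | succ d ih =>
      intro p h1 h2
      have h3 : c (p + d + 1) ≤ c (p + d) := hdec (p + d) (by omega) (by omega)
      have h4 : c (p + d) ≤ c p := ih p h1 (by omega)
      have : p + (d + 1) = p + d + 1 := by omega
      rw [this]; linarith
  intro p q h1 h2 h3
  have : q = p + (q - p) := by omega
  rw [this]; exact key (q - p) p h1 (by omega)

theorem carry_impA (hx : PatA k c x i) : CarryOp k c i x (impA k i x) := by
  refine ⟨?_, ?_, ?_⟩
  · simp [impA]
  · intro l h1 h2
    have hne : ¬(i + l = i) := by omega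
    have hin : i + 1 ≤ i + l ∧ i + l ≤ i + k := by omega
    simp only [impA, if_neg hne, if_pos hin]
    rw [← hx l h1 h2]; push_cast; ring
  · intro n hn
    rcases hn with h | h
    · have : ¬(n = i) := by omega
      simp only [impA, if_neg this]
      rw [if_neg]; omega
    · have : ¬(n = i) := by omega
      simp only [impA, if_neg this]
      rw [if_neg]; omega

theorem borrow_impBz (hc1 : ∀ l, 1 ≤ l → l ≤ k → 1 ≤ c l)
    (hx : PatB k c x i s) : BorrowOp k c (i + s) x (impBz k c i s x) := by
  obtain ⟨hs1, hs2, hpre, hsur⟩ := hx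
  have hxq : 1 ≤ x (i + s) := by
    have := hc1 s hs1 hs2
    have : (1 : ℤ) ≤ (x (i + s) : ℤ) := by linarith
    exact_mod_cast this
  refine ⟨?_, ?_, ?_⟩
  · have h1 : ¬(i + s + 1 ≤ i + s ∧ i + s ≤ i + s + k) := by omega
    have h2 : impBz k c i s x (i + s) = x (i + s) - 1 := by
      simp only [impBz, if_neg h1, eq_self_iff_true, if_true]
    rw [h2]; omega
  · intro l h1 h2
    have hin : i + s + 1 ≤ i + s + l ∧ i + s + l ≤ i + s + k := by omega
    have hsub : i + s + l - (i + s) = l := by omega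
    simp only [impBz, if_pos hin, hsub]
    have := hc1 l h1 h2
    push_cast [Int.toNat_of_nonneg (by linarith : (0:ℤ) ≤ c l)]
    ring
  · intro n hn
    have h1 : ¬(i + s + 1 ≤ n ∧ n ≤ i + s + k) := by omega
    have h2 : ¬(n = i + s) := by omega
    simp only [impBz, if_neg h1, if_neg h2]

end Basic
end CNSR
namespace CNSR
section Basic2
variable {k : ℕ} {c : ℕ → ℤ} {x y : ℕ → ℕ} {i s T : ℕ}

theorem impBz_ge (hc1 : ∀ l, 1 ≤ l → l ≤ k → 1 ≤ c l)
    (hmono : ∀ p q, 1 ≤ p → p ≤ q → q ≤ k → c q ≤ c p)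
    (hx : PatB k c x i s) :
    ∀ l, 1 ≤ l → l ≤ k → c l ≤ (impBz k c i s x (i + l) : ℤ) := by
  obtain ⟨hs1, hs2, hpre, hsur⟩ := hx
  intro l h1 h2
  rcases lt_trichotomy l s with hl | hl | hl
  · -- below the surplus : untouched, equals c l
    have ha : ¬(i + s + 1 ≤ i + l ∧ i + l ≤ i + s + k) := by omega
    have hb : ¬(i + l = i + s) := by omega
    have : impBz k c i s x (i + l) = x (i + l) := by
      simp only [impBz, if_neg ha, if_neg hb]
    rw [this, hpre l h1 hl]
  · -- the surplus position, decremented by one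
    have ha : ¬(i + s + 1 ≤ i + l ∧ i + l ≤ i + s + k) := by omega
    have hb : i + l = i + s := by omega
    have hval : impBz k c i s x (i + l) = x (i + l) - 1 := by
      simp only [impBz, if_neg ha, if_pos hb]
    rw [hval]
    have hxq : 1 ≤ x (i + l) := by
      have := hc1 s hs1 hs2
      have h' : (1 : ℤ) ≤ (x (i + l) : ℤ) := by rw [hb]; linarith
      exact_mod_cast h'
    have hcast : ((x (i + l) - 1 : ℕ) : ℤ) = (x (i + l) : ℤ) - 1 := by
      omega
    rw [hcast, hb, hl]
    linarith
  · -- above the surplus : received c (l - s)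
    have ha : i + s + 1 ≤ i + l ∧ i + l ≤ i + s + k := by omega
    have hsub : i + l - (i + s) = l - s := by omega
    have : impBz k c i s x (i + l) = x (i + l) + (c (l - s)).toNat := by
      simp only [impBz, if_pos ha, hsub]
    rw [this]
    have h3 : 1 ≤ c (l - s) := hc1 (l - s) (by omega) (by omega)
    have h4 : c l ≤ c (l - s) := hmono (l - s) l (by omega) (by omega) h2
    push_cast [Int.toNat_of_nonneg (by linarith : (0:ℤ) ≤ c (l - s))]
    have : (0 : ℤ) ≤ (x (i + l) : ℤ) := by positivity
    linarith

theorem carry_impB (hc1 : ∀ l, 1 ≤ l → l ≤ k → 1 ≤ c l)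
    (hmono : ∀ p q, 1 ≤ p → p ≤ q → q ≤ k → c q ≤ c p)
    (hx : PatB k c x i s) :
    CarryOp k c i (impBz k c i s x) (impB k c i s x) := by
  have hge := impBz_ge hc1 hmono hx
  refine ⟨?_, ?_, ?_⟩
  · simp [impB]
  · intro l h1 h2
    have hne : ¬(i + l = i) := by omega
    have hin : i + 1 ≤ i + l ∧ i + l ≤ i + k := by omega
    have hsub : i + l - i = l := by omega
    have : impB k c i s x (i + l) = ((impBz k c i s x (i + l) : ℤ) - c l).toNat := by
      simp only [impB, if_neg hne, if_pos hin, hsub]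
    rw [this]
    rw [Int.toNat_of_nonneg (by linarith [hge l h1 h2] : (0:ℤ) ≤ (impBz k c i s x (i + l) : ℤ) - c l)]
  · intro n hn
    have h1 : ¬(n = i) := by omega
    have h2 : ¬(i + 1 ≤ n ∧ n ≤ i + k) := by omega
    simp only [impB, if_neg h1, if_neg h2]

theorem imp_reach (hc1 : ∀ l, 1 ≤ l → l ≤ k → 1 ≤ c l)
    (hmono : ∀ p q, 1 ≤ p → p ≤ q → q ≤ k → c q ≤ c p)
    (h : Imp k c x y i s) : Reach k c x y := by
  rcases h with ⟨hp, rfl⟩ | ⟨hp, rfl⟩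
  · exact Relation.ReflTransGen.single ⟨i, Or.inl (carry_impA hp)⟩
  · exact Relation.ReflTransGen.trans
      (Relation.ReflTransGen.single ⟨i + s, Or.inr (borrow_impBz hc1 hp)⟩)
      (Relation.ReflTransGen.single ⟨i, Or.inl (carry_impB hc1 hmono hp)⟩)

theorem imp_eq_outside (h : Imp k c x y i s) (hs : s ≤ k) :
    ∀ n, n < i ∨ i + 2 * k < n → y n = x n := by
  intro n hn
  rcases h with ⟨hp, rfl⟩ | ⟨hp, rfl⟩
  · have h1 : ¬(n = i) := by omega
    have h2 : ¬(i + 1 ≤ n ∧ n ≤ i + k) := by omega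
    simp only [impA, if_neg h1, if_neg h2]
  · have h1 : ¬(n = i) := by omega
    have h2 : ¬(i + 1 ≤ n ∧ n ≤ i + k) := by omega
    have h3 : ¬(i + s + 1 ≤ n ∧ n ≤ i + s + k) := by omega
    have h4 : ¬(n = i + s) := by
      obtain ⟨hs1, _, _, _⟩ := hp; omega
    simp only [impB, if_neg h1, if_neg h2, impBz, if_neg h3, if_neg h4]

theorem imp_incr (h : Imp k c x y i s) : y i = x i + 1 := by
  rcases h with ⟨hp, rfl⟩ | ⟨hp, rfl⟩
  · simp [impA]
  · obtain ⟨hs1, _, _, _⟩ := hp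
    have h1 : ¬(i + s + 1 ≤ i ∧ i ≤ i + s + k) := by omega
    have h2 : ¬(i = i + s) := by omega
    simp only [impB, eq_self_iff_true, if_true, impBz, if_neg h1, if_neg h2]

theorem imp_dec (h : Imp k c x y i s) (hs : s ≤ k) :
    ∀ n, y n < x n → i < n ∧ n ≤ i + k := by
  intro n hlt
  by_contra hcon
  rcases h with ⟨hp, hy⟩ | ⟨hp, hy⟩
  · subst hy
    by_cases h1 : n = i
    · subst h1; simp only [impA, eq_self_iff_true, if_true] at hlt; omega
    · have h2 : ¬(i + 1 ≤ n ∧ n ≤ i + k) := by omega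
      simp only [impA, if_neg h1, if_neg h2] at hlt; omega
  · subst hy
    obtain ⟨hs1, hs2, _, _⟩ := hp
    by_cases h1 : n = i
    · have ha : ¬(i + s + 1 ≤ n ∧ n ≤ i + s + k) := by omega
      have hb : ¬(n = i + s) := by omega
      have hv : impB k c i s x n = impBz k c i s x n + 1 := by
        simp only [impB, if_pos h1]
      have hv2 : impBz k c i s x n = x n := by
        simp only [impBz, if_neg ha, if_neg hb]
      rw [hv, hv2] at hlt; omega
    · have h2 : ¬(i + 1 ≤ n ∧ n ≤ i + k) := by omega
      have h4 : ¬(n = i + s) := by omega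
      by_cases h3 : i + s + 1 ≤ n ∧ n ≤ i + s + k
      · have : impB k c i s x n = x n + (c (n - (i+s))).toNat := by
          simp only [impB, if_neg h1, if_neg h2, impBz, if_pos h3]
        rw [this] at hlt; omega
      · have : impB k c i s x n = x n := by
          simp only [impB, if_neg h1, if_neg h2, impBz, if_neg h3, if_neg h4]
        rw [this] at hlt; omega

theorem imp_bdd (h : Imp k c x y i s) (hs : s ≤ k) (hx : Bdd T x) (hi : i ≤ T) :
    Bdd (T + 2 * k) y := by
  intro n hn
  rw [imp_eq_outside h hs n (Or.inr (by omega))]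
  exact hx n (by omega)

end Basic2
end CNSR
namespace CNSR
section Dicho
variable {k : ℕ} {c : ℕ → ℤ}

theorem dichotomy : ∀ T : ℕ, ∀ x : ℕ → ℕ, Bdd T x →
    IsSR k c x ∨ ∃ i, PatA k c x i ∨ ∃ s, PatB k c x i s := by
  intro T
  induction T with
  | zero =>
    intro x hx
    exact Or.inl (IsSR.zero x (fun n hn => hx n (by omega)))
  | succ T ih =>
    intro x hx
    classical
    by_cases hP : ∃ l, 1 ≤ l ∧ l ≤ k ∧ (x l : ℤ) ≠ c l
    · have hex : ∃ l, 1 ≤ l ∧ l ≤ k ∧ (x l : ℤ) ≠ c l := hP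
      set s := Nat.find hex with hs_def
      have hPs : 1 ≤ s ∧ s ≤ k ∧ (x s : ℤ) ≠ c s := Nat.find_spec hex
      have hpre : ∀ l, 1 ≤ l → l < s → (x l : ℤ) = c l := by
        intro l h1 hl
        by_contra hne
        exact Nat.find_min hex hl ⟨h1, by omega, hne⟩
      rcases lt_or_gt_of_ne hPs.2.2 with hlt | hgt
      · -- a legal chunk at the front ; recurse on the tail
        have hbdd : Bdd T (fun n => x (s + n)) := by
          intro n hn
          exact hx (s + n) (by omega)
        rcases ih (fun n => x (s + n)) hbdd with hSR | ⟨i, hpat⟩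
        · left
          refine IsSR.chunk x s 0 hPs.1 hPs.2.1 hpre hlt (by intro i h1 h2; omega) ?_
          exact hSR
        · right
          refine ⟨s + i, ?_⟩
          rcases hpat with hA | ⟨s', hB⟩
          · left
            intro l h1 h2
            have := hA l h1 h2
            simpa [Nat.add_assoc] using this
          · right
            refine ⟨s', hB.1, hB.2.1, ?_, ?_⟩
            · intro l h1 h2
              have := hB.2.2.1 l h1 h2
              simpa [Nat.add_assoc] using this
            · have := hB.2.2.2
              simpa [Nat.add_assoc] using this
      · -- surplus at position s : pattern B based at 0
        right
        refine ⟨0, Or.inr ⟨s, hPs.1, hPs.2.1, ?_, ?_⟩⟩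
        · intro l h1 h2
          simpa using hpre l h1 h2
        · simpa using hgt
    · -- the whole block matches c : pattern A based at 0
      push_neg at hP
      right
      refine ⟨0, Or.inl ?_⟩
      intro l h1 h2
      simpa using hP l h1 h2

end Dicho
end CNSR
namespace CNSR
section Psums
variable {k : ℕ} {c : ℕ → ℤ} {x y : ℕ → ℕ} {i s T : ℕ} {θ : ℚ}

def Psum (θ : ℚ) (T : ℕ) (x : ℕ → ℕ) : ℚ :=
  ∑ n ∈ Finset.range (T + 1), (x n : ℚ) * θ ^ n

def Fq (k : ℕ) (c : ℕ → ℤ) (θ : ℚ) : ℚ :=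
  ∑ l ∈ Finset.Icc 1 k, (c l : ℚ) * θ ^ l

theorem borrow_iff_carry {a b : ℕ → ℕ} :
    BorrowOp k c i a b ↔ CarryOp k c i b a := by
  constructor
  · rintro ⟨h1, h2, h3⟩
    refine ⟨h1, fun l hl1 hl2 => by have := h2 l hl1 hl2; linarith,
      fun n hn => (h3 n hn).symm⟩
  · rintro ⟨h1, h2, h3⟩
    refine ⟨h1, fun l hl1 hl2 => by have := h2 l hl1 hl2; linarith,
      fun n hn => (h3 n hn).symm⟩

theorem carry_psum (hca : CarryOp k c i x y) (hiT : i + k ≤ T) :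
    Psum θ T y = Psum θ T x + θ ^ i * (1 - Fq k c θ) := by
  obtain ⟨h1, h2, h3⟩ := hca
  have hpt : ∀ n ∈ Finset.range (T + 1), (y n : ℚ) * θ ^ n =
      (x n : ℚ) * θ ^ n + ((if n = i then θ ^ i else 0)
        - ∑ l ∈ Finset.Icc 1 k, if n = i + l then (c l : ℚ) * θ ^ (i + l) else 0) := by
    intro n _
    by_cases hni : n = i
    · subst hni
      have hz : (∑ l ∈ Finset.Icc 1 k, if n = n + l then (c l : ℚ) * θ ^ (n + l) else 0) = 0 := by
        apply Finset.sum_eq_zero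
        intro l hl
        rw [if_neg]
        simp only [Finset.mem_Icc] at hl
        omega
      rw [if_pos rfl, hz, h1]
      push_cast
      ring
    · by_cases hmid : i + 1 ≤ n ∧ n ≤ i + k
      · set l₀ := n - i with hl₀
        have hn_eq : n = i + l₀ := by omega
        have hl₀mem : l₀ ∈ Finset.Icc 1 k := by
          simp only [Finset.mem_Icc]; omega
        have hsum : (∑ l ∈ Finset.Icc 1 k, if n = i + l then (c l : ℚ) * θ ^ (i + l) else 0)
            = (c l₀ : ℚ) * θ ^ (i + l₀) := by
          rw [Finset.sum_eq_single l₀]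
          · rw [if_pos hn_eq]
          · intro l hl hne
            rw [if_neg]
            intro hcon
            exact hne (by omega)
          · intro hcon
            exact absurd hl₀mem hcon
        have hyn : (y n : ℚ) = (x n : ℚ) - (c l₀ : ℚ) := by
          have := h2 l₀ (by omega) (by omega)
          rw [← hn_eq] at this
          exact_mod_cast this
        rw [if_neg hni, hsum, hyn, hn_eq]
        ring
      · have hout : y n = x n := h3 n (by omega)
        have hz : (∑ l ∈ Finset.Icc 1 k, if n = i + l then (c l : ℚ) * θ ^ (i + l) else 0) = 0 := by
          apply Finset.sum_eq_zero
          intro l hl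
          simp only [Finset.mem_Icc] at hl
          rw [if_neg]
          omega
        rw [if_neg hni, hz, hout]
        ring
  have hmain : Psum θ T y = Psum θ T x
      + ((∑ n ∈ Finset.range (T + 1), if n = i then θ ^ i else 0)
        - ∑ n ∈ Finset.range (T + 1), ∑ l ∈ Finset.Icc 1 k,
            if n = i + l then (c l : ℚ) * θ ^ (i + l) else 0) := by
    unfold Psum
    rw [Finset.sum_congr rfl hpt, Finset.sum_add_distrib, Finset.sum_sub_distrib]
  have e1 : (∑ n ∈ Finset.range (T + 1), if n = i then θ ^ i else 0) = θ ^ i := by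
    rw [Finset.sum_ite_eq' (Finset.range (T + 1)) i (fun _ => θ ^ i)]
    rw [if_pos (Finset.mem_range.mpr (by omega))]
  have e2 : (∑ n ∈ Finset.range (T + 1), ∑ l ∈ Finset.Icc 1 k,
      if n = i + l then (c l : ℚ) * θ ^ (i + l) else 0) = θ ^ i * Fq k c θ := by
    rw [Finset.sum_comm]
    have : ∀ l ∈ Finset.Icc 1 k,
        (∑ n ∈ Finset.range (T + 1), if n = i + l then (c l : ℚ) * θ ^ (i + l) else 0)
          = (c l : ℚ) * θ ^ i * θ ^ l := by
      intro l hl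
      simp only [Finset.mem_Icc] at hl
      rw [Finset.sum_ite_eq' (Finset.range (T + 1)) (i + l) (fun _ => (c l : ℚ) * θ ^ (i + l))]
      rw [if_pos (Finset.mem_range.mpr (by omega)), pow_add]
      ring
    rw [Finset.sum_congr rfl this]
    unfold Fq
    rw [Finset.mul_sum]
    apply Finset.sum_congr rfl
    intro l _
    ring
  rw [hmain, e1, e2]
  ring

theorem borrow_psum {z : ℕ → ℕ} (hbo : BorrowOp k c i x z) (hiT : i + k ≤ T) :
    Psum θ T z = Psum θ T x - θ ^ i * (1 - Fq k c θ) := by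
  have := carry_psum (θ := θ) (borrow_iff_carry.mp hbo) hiT
  linarith

theorem psum_stable (hx : Bdd T x) (hTT : T ≤ T') : Psum θ T' x = Psum θ T x := by
  unfold Psum
  symm
  apply Finset.sum_subset
  · exact Finset.range_subset_range.mpr (by omega)
  · intro n hn hnotin
    simp only [Finset.mem_range, not_lt] at hn hnotin
    rw [hx n (by omega)]
    simp

theorem psum_nonneg (hθ : 0 ≤ θ) : 0 ≤ Psum θ T x := by
  apply Finset.sum_nonneg
  intro n _
  positivity

theorem sum_le_psum_one {p : ℕ} (hpT : p ≤ T) :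
    (∑ n ∈ Finset.range (p + 1), (x n : ℚ)) ≤ Psum 1 T x := by
  unfold Psum
  simp only [one_pow, mul_one]
  apply Finset.sum_le_sum_of_subset_of_nonneg
  · exact Finset.range_subset_range.mpr (by omega)
  · intro n _ _
    positivity

end Psums
end CNSR
namespace CNSR
section Theta
variable {k : ℕ} {c : ℕ → ℤ} {x y : ℕ → ℕ} {i s T : ℕ} {θ : ℚ}

/-- the rational weight base -/
def θk (k : ℕ) : ℚ := 1 - 1 / (2 * (k : ℚ) + 1)

theorem θk_pos (hk : 1 ≤ k) : 0 < θk k := by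
  have hK : (1 : ℚ) ≤ (k : ℚ) := by exact_mod_cast hk
  have hden : (0 : ℚ) < 2 * (k : ℚ) + 1 := by linarith
  have : 1 / (2 * (k : ℚ) + 1) < 1 := by
    rw [div_lt_one hden]; linarith
  unfold θk; linarith

theorem θk_lt_one (hk : 1 ≤ k) : θk k < 1 := by
  have hK : (1 : ℚ) ≤ (k : ℚ) := by exact_mod_cast hk
  have hden : (0 : ℚ) < 2 * (k : ℚ) + 1 := by linarith
  have : 0 < 1 / (2 * (k : ℚ) + 1) := by positivity
  unfold θk; linarith

theorem Fq_gt_one (hk : 2 ≤ k) (hc1 : ∀ l, 1 ≤ l → l ≤ k → 1 ≤ c l) :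
    1 < Fq k c (θk k) := by
  have hK : (2 : ℚ) ≤ (k : ℚ) := by exact_mod_cast hk
  have hden : (0 : ℚ) < 2 * (k : ℚ) + 1 := by linarith
  set u : ℚ := 1 / (2 * (k : ℚ) + 1) with hu_def
  have hu : 0 < u := by positivity
  have hu1 : u < 1 := by rw [hu_def, div_lt_one hden]; linarith
  have hθ0 : 0 ≤ θk k := le_of_lt (θk_pos (by omega))
  have hθ1 : θk k ≤ 1 := le_of_lt (θk_lt_one (by omega))
  -- step 1 : Fq dominates the sum of pure powers
  have step1 : (∑ l ∈ Finset.Icc 1 k, θk k ^ l) ≤ Fq k c (θk k) := by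
    apply Finset.sum_le_sum
    intro l hl
    simp only [Finset.mem_Icc] at hl
    have hcl : (1 : ℚ) ≤ (c l : ℚ) := by exact_mod_cast hc1 l hl.1 hl.2
    have : (0 : ℚ) ≤ θk k ^ l := by positivity
    nlinarith
  -- step 2 : each power is at least θ^k
  have step2 : (k : ℚ) * θk k ^ k ≤ ∑ l ∈ Finset.Icc 1 k, θk k ^ l := by
    have : ∀ l ∈ Finset.Icc 1 k, θk k ^ k ≤ θk k ^ l := by
      intro l hl
      simp only [Finset.mem_Icc] at hl
      exact pow_le_pow_of_le_one hθ0 hθ1 hl.2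
    calc (k : ℚ) * θk k ^ k = ∑ _l ∈ Finset.Icc 1 k, θk k ^ k := by
          rw [Finset.sum_const, Nat.card_Icc]
          simp [nsmul_eq_mul]
      _ ≤ _ := Finset.sum_le_sum this
  -- step 3 : Bernoulli
  have step3 : 1 - (k : ℚ) * u ≤ θk k ^ k := by
    have hb := one_add_mul_le_pow (a := -u) (by linarith) k
    have : θk k = 1 + (-u) := by rw [hu_def]; unfold θk; ring
    rw [this]
    calc 1 - (k:ℚ) * u = 1 + (k:ℚ) * (-u) := by ring
      _ ≤ (1 + (-u)) ^ k := hb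
  -- step 4 : numeric
  have step4 : 1 < (k : ℚ) * (1 - (k : ℚ) * u) := by
    have hueq : u * (2 * (k:ℚ) + 1) = 1 := by
      rw [hu_def]; field_simp
    nlinarith
  have hkq : (0:ℚ) ≤ (k:ℚ) := by positivity
  nlinarith

theorem Fq_one_ge (hk : 1 ≤ k) (hc1 : ∀ l, 1 ≤ l → l ≤ k → 1 ≤ c l) :
    1 ≤ Fq k c 1 := by
  have : (∑ l ∈ Finset.Icc 1 k, (1:ℚ)) ≤ Fq k c 1 := by
    apply Finset.sum_le_sum
    intro l hl
    simp only [Finset.mem_Icc] at hl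
    have hcl : (1 : ℚ) ≤ (c l : ℚ) := by exact_mod_cast hc1 l hl.1 hl.2
    simpa using hcl
  have hcard : (∑ _l ∈ Finset.Icc 1 k, (1:ℚ)) = (k:ℚ) := by
    rw [Finset.sum_const, Nat.card_Icc]
    simp [nsmul_eq_mul]
  have hK : (1:ℚ) ≤ (k:ℚ) := by exact_mod_cast hk
  linarith [this, hcard.symm.le]

theorem imp_psum (hc1 : ∀ l, 1 ≤ l → l ≤ k → 1 ≤ c l)
    (hmono : ∀ p q, 1 ≤ p → p ≤ q → q ≤ k → c q ≤ c p)
    (hθ0 : 0 < θ) (hθ1 : θ < 1) (hF : 1 < Fq k c θ)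
    (h : Imp k c x y i s) (hiT : i + 2 * k ≤ T) :
    Psum θ T y ≤ Psum θ T x - (Fq k c θ - 1) * (1 - θ) * θ ^ i := by
  have hpi : (0:ℚ) < θ ^ i := pow_pos hθ0 i
  rcases h with ⟨hp, rfl⟩ | ⟨hp, rfl⟩
  · rw [carry_psum (carry_impA hp) (by omega)]
    have h1 : (0:ℚ) ≤ Fq k c θ - 1 := by linarith
    nlinarith [mul_nonneg (mul_nonneg h1 hpi.le) hθ0.le]
  · have hs1 : 1 ≤ s := hp.1
    have hs2 : s ≤ k := hp.2.1
    have h1 := borrow_psum (θ := θ) (T := T) (borrow_impBz hc1 hp) (by omega)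
    have h2 := carry_psum (θ := θ) (T := T) (carry_impB hc1 hmono hp) (by omega)
    rw [h2, h1]
    have hpow : θ ^ (i + s) ≤ θ ^ (i + 1) :=
      pow_le_pow_of_le_one (le_of_lt hθ0) (le_of_lt hθ1) (by omega)
    have hps : θ ^ (i + 1) = θ ^ i * θ := pow_succ θ i
    nlinarith

theorem imp_usum (hc1 : ∀ l, 1 ≤ l → l ≤ k → 1 ≤ c l) (hk : 1 ≤ k)
    (hmono : ∀ p q, 1 ≤ p → p ≤ q → q ≤ k → c q ≤ c p)
    (h : Imp k c x y i s) (hiT : i + 2 * k ≤ T) :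
    Psum 1 T y ≤ Psum 1 T x := by
  have hF1 : 1 ≤ Fq k c 1 := Fq_one_ge hk hc1
  rcases h with ⟨hp, rfl⟩ | ⟨hp, rfl⟩
  · rw [carry_psum (carry_impA hp) (by omega)]
    simp only [one_pow]
    linarith
  · have hs1 : 1 ≤ s := hp.1
    have hs2 : s ≤ k := hp.2.1
    have h1 := borrow_psum (θ := 1) (T := T) (borrow_impBz hc1 hp) (by omega)
    have h2 := carry_psum (θ := 1) (T := T) (carry_impB hc1 hmono hp) (by omega)
    rw [h2, h1]
    simp only [one_pow]
    linarith

end Theta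
end CNSR
namespace CNSR
section Vsums
variable {k : ℕ} {c : ℕ → ℤ} {x y : ℕ → ℕ} {i s T : ℕ}
variable {M : Type*} [AddCommGroup M] {V : ℤ → M}

def Vsum (V : ℤ → M) (N : ℕ) (x : ℕ → ℕ) : M :=
  ∑ n ∈ Finset.Icc 1 N, (x n : ℤ) • V (-(n : ℤ))

theorem carry_vsum {N : ℕ}
    (hVrec : ∀ n : ℤ, V n = ∑ l ∈ Finset.Icc 1 k, c l • V (n - (l : ℤ)))
    (hV0 : V 0 = 0) (hk1 : 1 ≤ k)
    (hca : CarryOp k c i x y) (hiN : i + k ≤ N) :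
    Vsum V N y = Vsum V N x := by
  obtain ⟨h1, h2, h3⟩ := hca
  have hpt : ∀ n ∈ Finset.Icc 1 N, (y n : ℤ) • V (-(n:ℤ)) =
      (x n : ℤ) • V (-(n:ℤ)) + ((if n = i then V (-(i:ℤ)) else 0)
        - ∑ l ∈ Finset.Icc 1 k, if n = i + l then c l • V (-((i + l : ℕ) : ℤ)) else 0) := by
    intro n _
    by_cases hni : n = i
    · subst hni
      have hz : (∑ l ∈ Finset.Icc 1 k,
          if n = n + l then c l • V (-((n + l : ℕ) : ℤ)) else 0) = 0 := by
        apply Finset.sum_eq_zero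
        intro l hl
        simp only [Finset.mem_Icc] at hl
        rw [if_neg]; omega
      rw [if_pos rfl, hz, h1]
      push_cast
      rw [add_smul, one_smul]
      abel
    · by_cases hmid : i + 1 ≤ n ∧ n ≤ i + k
      · set l₀ := n - i with hl₀
        have hn_eq : n = i + l₀ := by omega
        have hl₀mem : l₀ ∈ Finset.Icc 1 k := by
          simp only [Finset.mem_Icc]; omega
        have hsum : (∑ l ∈ Finset.Icc 1 k,
            if n = i + l then c l • V (-((i + l : ℕ) : ℤ)) else 0)
              = c l₀ • V (-((i + l₀ : ℕ) : ℤ)) := by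
          rw [Finset.sum_eq_single l₀]
          · rw [if_pos hn_eq]
          · intro l hl hne
            rw [if_neg]
            intro hcon
            exact hne (by omega)
          · intro hcon
            exact absurd hl₀mem hcon
        have hyn : (y n : ℤ) = (x n : ℤ) - c l₀ := by
          have := h2 l₀ (by omega) (by omega)
          rw [← hn_eq] at this
          exact this
        rw [if_neg hni, hsum, hyn, ← hn_eq, sub_smul]
        abel
      · have hout : y n = x n := h3 n (by omega)
        have hz : (∑ l ∈ Finset.Icc 1 k,
            if n = i + l then c l • V (-((i + l : ℕ) : ℤ)) else 0) = 0 := by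
          apply Finset.sum_eq_zero
          intro l hl
          simp only [Finset.mem_Icc] at hl
          rw [if_neg]; omega
        rw [if_neg hni, hz, hout]
        abel
  have hmain : Vsum V N y = Vsum V N x
      + ((∑ n ∈ Finset.Icc 1 N, if n = i then V (-(i:ℤ)) else 0)
        - ∑ n ∈ Finset.Icc 1 N, ∑ l ∈ Finset.Icc 1 k,
            if n = i + l then c l • V (-((i + l : ℕ) : ℤ)) else 0) := by
    unfold Vsum
    rw [Finset.sum_congr rfl hpt, Finset.sum_add_distrib, Finset.sum_sub_distrib]
  have e2 : (∑ n ∈ Finset.Icc 1 N, ∑ l ∈ Finset.Icc 1 k,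
      if n = i + l then c l • V (-((i + l : ℕ) : ℤ)) else 0)
        = ∑ l ∈ Finset.Icc 1 k, c l • V (-(i:ℤ) - (l:ℤ)) := by
    rw [Finset.sum_comm]
    apply Finset.sum_congr rfl
    intro l hl
    simp only [Finset.mem_Icc] at hl
    rw [Finset.sum_ite_eq' (Finset.Icc 1 N) (i + l) (fun _ => c l • V (-((i + l : ℕ) : ℤ)))]
    rw [if_pos (Finset.mem_Icc.mpr (by omega))]
    congr 1
    push_cast
    ring
  by_cases hi : 1 ≤ i
  · have e1 : (∑ n ∈ Finset.Icc 1 N, if n = i then V (-(i:ℤ)) else 0) = V (-(i:ℤ)) := by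
      rw [Finset.sum_ite_eq' (Finset.Icc 1 N) i (fun _ => V (-(i:ℤ)))]
      rw [if_pos (Finset.mem_Icc.mpr (by omega))]
    rw [hmain, e1, e2, ← hVrec (-(i:ℤ))]
    abel
  · have hi0 : i = 0 := by omega
    subst hi0
    have e1 : (∑ n ∈ Finset.Icc 1 N, if n = 0 then V (-(0:ℕ):ℤ) else 0) = 0 := by
      apply Finset.sum_eq_zero
      intro n hn
      simp only [Finset.mem_Icc] at hn
      rw [if_neg]; omega
    rw [hmain, e1, e2]
    have : (∑ l ∈ Finset.Icc 1 k, c l • V (-(0:ℕ) - (l:ℤ))) = V 0 := by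
      rw [hVrec 0]
      apply Finset.sum_congr rfl
      intro l _
      norm_num
    rw [this, hV0]
    abel

theorem imp_vsum {N : ℕ}
    (hVrec : ∀ n : ℤ, V n = ∑ l ∈ Finset.Icc 1 k, c l • V (n - (l : ℤ)))
    (hV0 : V 0 = 0) (hk1 : 1 ≤ k)
    (hc1 : ∀ l, 1 ≤ l → l ≤ k → 1 ≤ c l)
    (hmono : ∀ p q, 1 ≤ p → p ≤ q → q ≤ k → c q ≤ c p)
    (h : Imp k c x y i s) (hiN : i + 2 * k ≤ N) :
    Vsum V N y = Vsum V N x := by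
  rcases h with ⟨hp, rfl⟩ | ⟨hp, rfl⟩
  · exact carry_vsum hVrec hV0 hk1 (carry_impA hp) (by omega)
  · have hs1 : 1 ≤ s := hp.1
    have hs2 : s ≤ k := hp.2.1
    have hb : Vsum V N x = Vsum V N (impBz k c i s x) :=
      carry_vsum (N := N) hVrec hV0 hk1 (borrow_iff_carry.mp (borrow_impBz hc1 hp))
        (by omega)
    have hcar := carry_vsum (N := N) hVrec hV0 hk1 (carry_impB hc1 hmono hp) (by omega)
    rw [hcar, ← hb]

theorem vsum_stable {N N' : ℕ} (hx : Bdd N x) (hNN : N ≤ N') :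
    Vsum V N' x = Vsum V N x := by
  unfold Vsum
  symm
  apply Finset.sum_subset
  · exact Finset.Icc_subset_Icc_right hNN
  · intro n hn hnotin
    simp only [Finset.mem_Icc] at hn hnotin
    rw [hx n (by omega)]
    simp

end Vsums
end CNSR
namespace CNSR

theorem exists_mono_seq {P : ℕ → Prop} (h : ∀ m, ∃ t, m ≤ t ∧ P t) :
    ∃ g : ℕ → ℕ, (∀ n, P (g n)) ∧ ∀ n, g n < g (n + 1) := by
  choose f h1 h2 using h
  refine ⟨fun n => Nat.rec (f 0) (fun _ prev => f (prev + 1)) n, ?_, ?_⟩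
  · intro n
    cases n with
    | zero => exact h2 0
    | succ m => exact h2 _
  · intro n
    show (Nat.rec (f 0) (fun _ prev => f (prev + 1)) n : ℕ) <
      f ((Nat.rec (f 0) (fun _ prev => f (prev + 1)) n : ℕ) + 1)
    have := h1 ((Nat.rec (f 0) (fun _ prev => f (prev + 1)) n : ℕ) + 1)
    omega

theorem exists_decr {f : ℕ → ℕ} {t₁ t₂ : ℕ} (h1 : 1 ≤ f t₁) (h2 : f t₂ = 0)
    (h12 : t₁ ≤ t₂) : ∃ u, t₁ ≤ u ∧ u < t₂ ∧ f (u + 1) < f u := by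
  by_contra hcon
  push_neg at hcon
  have key : ∀ d, t₁ + d ≤ t₂ → f t₁ ≤ f (t₁ + d) := by
    intro d
    induction d with
    | zero => intro _; simp
    | succ d ih =>
      intro hd
      have h3 := hcon (t₁ + d) (by omega) (by omega)
      have h4 := ih (by omega)
      have h5 : t₁ + (d + 1) = (t₁ + d) + 1 := by omega
      rw [h5]; omega
  have h6 := key (t₂ - t₁) (by omega)
  rw [(by omega : t₁ + (t₂ - t₁) = t₂)] at h6
  omega

end CNSR
namespace CNSR

theorem main_norm (k : ℕ) (c : ℕ → ℤ) (hk : 2 ≤ k)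
    (hdec : ∀ i, 1 ≤ i → i < k → c (i + 1) ≤ c i) (hck : c k = 1)
    {W : Type*} [AddCommGroup W] (V : ℤ → W)
    (hVrec : ∀ n : ℤ, V n = ∑ l ∈ Finset.Icc 1 k, c l • V (n - (l : ℤ)))
    (hV0 : V 0 = 0)
    (a : ℕ → ℕ) (M₀ : ℕ) (hsupp : Bdd M₀ a) :
    ∃ b N, Reach k c a b ∧ IsSR k c b ∧ Bdd N b ∧ Vsum V N b = Vsum V M₀ a := by
  classical
  have hc1 : ∀ l, 1 ≤ l → l ≤ k → 1 ≤ c l := hc_one hdec hck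
  have hmono : ∀ p q, 1 ≤ p → p ≤ q → q ≤ k → c q ≤ c p := hc_mono hdec
  have hk1 : 1 ≤ k := by omega
  set θ : ℚ := θk k with hθdef
  have hθ0 : 0 < θ := θk_pos hk1
  have hθ1 : θ < 1 := θk_lt_one hk1
  have hF : 1 < Fq k c θ := Fq_gt_one hk hc1
  by_contra hG
  -- the state invariant
  set P : (ℕ → ℕ) × ℕ → Prop := fun p =>
    Bdd p.2 p.1 ∧ Vsum V p.2 p.1 = Vsum V M₀ a ∧ Reach k c a p.1 with hPdef
  -- one improvement step
  have hstep : ∀ p : (ℕ → ℕ) × ℕ, P p → ∃ y,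
      (∃ i s, Imp k c p.1 y i s ∧ i < p.2 ∧ 1 ≤ s ∧ s ≤ k) ∧ P (y, p.2 + 2 * k) := by
    rintro ⟨x, T⟩ ⟨hbdd0, hval0, hreach0⟩
    have hbdd : Bdd T x := hbdd0
    have hval : Vsum V T x = Vsum V M₀ a := hval0
    have hreach : Reach k c a x := hreach0
    rcases dichotomy T x hbdd with hSR | ⟨i, hpat⟩
    · exact absurd ⟨x, T, hreach, hSR, hbdd, hval⟩ hG
    · have hget : ∃ y i' s, Imp k c x y i' s ∧ 1 ≤ s ∧ s ≤ k ∧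
          (1 : ℤ) ≤ (x (i' + 1) : ℤ) := by
        rcases hpat with hA | ⟨s, hB⟩
        · refine ⟨impA k i x, i, 1, Or.inl ⟨hA, rfl⟩, le_rfl, hk1, ?_⟩
          rw [hA 1 le_rfl hk1]
          exact hc1 1 le_rfl hk1
        · refine ⟨impB k c i s x, i, s, Or.inr ⟨hB, rfl⟩, hB.1, hB.2.1, ?_⟩
          have hB1 : 1 ≤ s := hB.1
          by_cases hs1 : s = 1
          · subst hs1
            have := hB.2.2.2
            have := hc1 1 le_rfl hk1
            linarith
          · rw [hB.2.2.1 1 le_rfl (by omega)]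
            exact hc1 1 le_rfl hk1
      obtain ⟨y, i', s, himp, hs1, hsk, hx1⟩ := hget
      have hiT : i' < T := by
        by_contra hiT
        push_neg at hiT
        rw [hbdd (i' + 1) (by omega)] at hx1
        norm_num at hx1
      refine ⟨y, ⟨i', s, himp, hiT, hs1, hsk⟩, ?_, ?_, ?_⟩
      · exact imp_bdd himp hsk hbdd (by omega)
      · have h1 : Vsum V (T + 2 * k) y = Vsum V (T + 2 * k) x :=
          imp_vsum hVrec hV0 hk1 hc1 hmono himp (by omega)
        have h2 : Vsum V (T + 2 * k) x = Vsum V T x := vsum_stable hbdd (by omega)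
        rw [h1, h2, hval]
      · exact hreach.trans (imp_reach hc1 hmono himp)
  -- build the infinite run
  let St := {p : (ℕ → ℕ) × ℕ // P p}
  have hP0 : P (a, M₀) := ⟨hsupp, rfl, Relation.ReflTransGen.refl⟩
  let nxt : St → St := fun q =>
    ⟨((hstep q.1 q.2).choose, q.1.2 + 2 * k), (hstep q.1 q.2).choose_spec.2⟩
  let run : ℕ → St := fun t => nxt^[t] ⟨(a, M₀), hP0⟩
  let X : ℕ → ℕ → ℕ := fun t => (run t).1.1
  let Tt : ℕ → ℕ := fun t => (run t).1.2
  have hrun : ∀ t, run (t + 1) = nxt (run t) := fun t =>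
    Function.iterate_succ_apply' nxt t _
  have hTstep : ∀ t, Tt (t + 1) = Tt t + 2 * k := by
    intro t
    show (run (t + 1)).1.2 = (run t).1.2 + 2 * k
    rw [hrun t]
  have hPt : ∀ t, P ((run t).1) := fun t => (run t).2
  have hspec : ∀ t, ∃ i s, Imp k c (X t) (X (t + 1)) i s ∧ i < Tt t ∧ 1 ≤ s ∧ s ≤ k := by
    intro t
    have h := (hstep (run t).1 (run t).2).choose_spec.1
    have hXe : X (t + 1) = (hstep (run t).1 (run t).2).choose := by
      show (run (t + 1)).1.1 = _
      rw [hrun t]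
    rw [hXe]
    exact h
  choose J S hImp hJlt hS1 hSk using hspec
  have hBt : ∀ t, Bdd (Tt t) (X t) := fun t => (hPt t).1
  -- the decreasing potential
  let Φ : ℕ → ℚ := fun t => Psum θ (Tt t + 2 * k) (X t)
  have hΦstep : ∀ t, Φ (t + 1) ≤ Φ t - (Fq k c θ - 1) * (1 - θ) * θ ^ (J t) := by
    intro t
    have hb : Bdd (Tt (t + 1)) (X (t + 1)) := hBt (t + 1)
    have hstab : Psum θ (Tt (t + 1) + 2 * k) (X (t + 1))
        = Psum θ (Tt (t + 1)) (X (t + 1)) := psum_stable hb (by omega)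
    have himp := imp_psum (T := Tt t + 2 * k) hc1 hmono hθ0 hθ1 hF (hImp t)
      (by have := hJlt t; omega)
    show Psum θ (Tt (t + 1) + 2 * k) (X (t + 1)) ≤ _
    rw [hstab, hTstep t]
    exact himp
  have hΦle : ∀ t, Φ (t + 1) ≤ Φ t := by
    intro t
    have h := hΦstep t
    have h2 : (0:ℚ) ≤ (Fq k c θ - 1) * (1 - θ) * θ ^ (J t) :=
      mul_nonneg (mul_nonneg (by linarith) (by linarith)) (le_of_lt (pow_pos hθ0 (J t)))
    linarith
  have hΦmono : ∀ t d, Φ (t + d) ≤ Φ t := by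
    intro t d
    induction d with
    | zero => simp
    | succ d ih =>
      have := hΦle (t + d)
      have he : t + (d + 1) = (t + d) + 1 := by omega
      rw [he]
      linarith
  have hΦmono' : ∀ t t', t ≤ t' → Φ t' ≤ Φ t := by
    intro t t' h
    have := hΦmono t (t' - t)
    rwa [(by omega : t + (t' - t) = t')] at this
  have hΦnn : ∀ t, 0 ≤ Φ t := fun t => psum_nonneg (le_of_lt hθ0)
  -- only finitely many improvements at low positions
  have hTPex : ∀ p : ℕ, ∃ Tp, ∀ t, Tp ≤ t → p < J t := by
    intro p
    by_contra hcon
    push_neg at hcon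
    obtain ⟨g, hgP, hglt⟩ := exists_mono_seq hcon
    have hgm : StrictMono g := strictMono_nat_of_lt_succ hglt
    set δ : ℚ := (Fq k c θ - 1) * (1 - θ) * θ ^ p with hδdef
    have hδpos : 0 < δ := by
      have := pow_pos hθ0 p
      have h1 : (0:ℚ) < Fq k c θ - 1 := by linarith
      have h2 : (0:ℚ) < 1 - θ := by linarith
      positivity
    have hdrop : ∀ n, Φ (g n + 1) ≤ Φ (g n) - δ := by
      intro n
      have h := hΦstep (g n)
      have hple : θ ^ p ≤ θ ^ (J (g n)) :=
        pow_le_pow_of_le_one (le_of_lt hθ0) (le_of_lt hθ1) (hgP n)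
      have h1 : (0:ℚ) ≤ (Fq k c θ - 1) * (1 - θ) := by nlinarith
      have h2 : δ ≤ (Fq k c θ - 1) * (1 - θ) * θ ^ (J (g n)) := by
        rw [hδdef]
        exact mul_le_mul_of_nonneg_left hple h1
      linarith
    have hkey : ∀ n : ℕ, Φ (g n + 1) ≤ Φ 0 - (n + 1 : ℕ) * δ := by
      intro n
      induction n with
      | zero =>
        have h1 := hdrop 0
        have h2 : Φ (g 0) ≤ Φ 0 := hΦmono' 0 (g 0) (by omega)
        push_cast
        linarith
      | succ n ih =>
        have h1 := hdrop (n + 1)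
        have h2 : Φ (g (n + 1)) ≤ Φ (g n + 1) := hΦmono' _ _ (hglt n)
        push_cast at ih ⊢
        linarith
    obtain ⟨n, hn⟩ := exists_nat_gt (Φ 0 / δ)
    have h1 : Φ 0 < n * δ := by
      rw [div_lt_iff₀ hδpos] at hn
      linarith
    have h2 : (n:ℚ) * δ ≤ ((n + 1 : ℕ) : ℚ) * δ := by
      push_cast
      nlinarith
    have h3 := hkey n
    have h4 := hΦnn (g n + 1)
    linarith
  choose TP hTPs using hTPex
  -- pointwise stabilization
  let xstar : ℕ → ℕ := fun n => X (TP n) n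
  have hfreeze : ∀ n t, TP n ≤ t → X t n = xstar n := by
    intro n t ht
    induction t, ht using Nat.le_induction with
    | base => rfl
    | succ t ht ih =>
      have hJ : n < J t := hTPs n t ht
      have := imp_eq_outside (hImp t) (hSk t) n (Or.inl hJ)
      rw [this]
      exact ih
  -- unit count bound
  let Us : ℕ → ℚ := fun t => Psum 1 (Tt t + 2 * k) (X t)
  have hUstep : ∀ t, Us (t + 1) ≤ Us t := by
    intro t
    have hb : Bdd (Tt (t + 1)) (X (t + 1)) := hBt (t + 1)
    have hstab : Psum 1 (Tt (t + 1) + 2 * k) (X (t + 1))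
        = Psum 1 (Tt (t + 1)) (X (t + 1)) := psum_stable hb (by omega)
    have himp := imp_usum (T := Tt t + 2 * k) hc1 hk1 hmono (hImp t)
      (by have := hJlt t; omega)
    show Psum 1 (Tt (t + 1) + 2 * k) (X (t + 1)) ≤ _
    rw [hstab, hTstep t]
    exact himp
  have hUmono : ∀ t, Us t ≤ Us 0 := by
    intro t
    induction t with
    | zero => exact le_refl _
    | succ t ih =>
      have := hUstep t
      linarith
  have hTge : ∀ t, t ≤ Tt t + 2 * k := by
    intro t
    induction t with
    | zero => omega
    | succ t ih =>
      have := hTstep t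
      omega
  have hprefix : ∀ p, (∑ n ∈ Finset.range (p + 1), (xstar n : ℚ)) ≤ Us 0 := by
    intro p
    set t := max ((Finset.range (p + 1)).sup TP) p with htdef
    have h1 : ∀ n, n ≤ p → X t n = xstar n := by
      intro n hn
      apply hfreeze
      calc TP n ≤ (Finset.range (p + 1)).sup TP :=
            Finset.le_sup (Finset.mem_range.mpr (by omega))
        _ ≤ t := le_max_left _ _
    have hpT : p ≤ Tt t + 2 * k := le_trans (le_max_right _ _ : p ≤ t) (hTge t)
    have he : (∑ n ∈ Finset.range (p + 1), (xstar n : ℚ))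
        = ∑ n ∈ Finset.range (p + 1), (X t n : ℚ) := by
      apply Finset.sum_congr rfl
      intro n hn
      rw [h1 n (by simpa using Nat.lt_succ_iff.mp (Finset.mem_range.mp hn))]
    rw [he]
    calc (∑ n ∈ Finset.range (p + 1), (X t n : ℚ)) ≤ Psum 1 (Tt t + 2 * k) (X t) :=
          sum_le_psum_one hpT
      _ ≤ Us 0 := hUmono t
  -- the limit has finite support
  have hp₀ : ∃ p₀, ∀ n, p₀ < n → xstar n = 0 := by
    by_contra hcon
    push_neg at hcon
    have hcon' : ∀ m, ∃ n, m ≤ n ∧ xstar n ≠ 0 := by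
      intro m
      obtain ⟨n, h1, h2⟩ := hcon m
      exact ⟨n, by omega, h2⟩
    obtain ⟨g, hgP, hglt⟩ := exists_mono_seq hcon'
    have hgm : StrictMono g := strictMono_nat_of_lt_succ hglt
    set B := Nat.floor (Us 0) + 1 with hBdef
    have hsum : (B : ℚ) ≤ ∑ n ∈ Finset.range (g B + 1), (xstar n : ℚ) := by
      have c1 : (B : ℚ) = ∑ _j ∈ Finset.range B, (1 : ℚ) := by simp
      have c2 : (∑ _j ∈ Finset.range B, (1:ℚ))
          ≤ ∑ j ∈ Finset.range B, (xstar (g j) : ℚ) := by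
        apply Finset.sum_le_sum
        intro j _
        have := hgP j
        have h1 : 1 ≤ xstar (g j) := Nat.one_le_iff_ne_zero.mpr this
        exact_mod_cast h1
      have c3 : (∑ j ∈ Finset.range B, (xstar (g j) : ℚ))
          = ∑ n ∈ (Finset.range B).image g, (xstar n : ℚ) := by
        rw [Finset.sum_image]
        intro x _ y _ hxy
        exact hgm.injective hxy
      have c4 : (∑ n ∈ (Finset.range B).image g, (xstar n : ℚ))
          ≤ ∑ n ∈ Finset.range (g B + 1), (xstar n : ℚ) := by
        apply Finset.sum_le_sum_of_subset_of_nonneg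
        · intro n hn
          simp only [Finset.mem_image, Finset.mem_range] at hn ⊢
          obtain ⟨j, hj, rfl⟩ := hn
          have : g j ≤ g B := hgm.monotone (by omega)
          omega
        · intro n _ _
          positivity
      linarith
    have h5 := hprefix (g B)
    have hflt : Us 0 < (B : ℚ) := by
      rw [hBdef]
      push_cast
      exact Nat.lt_floor_add_one (Us 0)
    linarith
  obtain ⟨p₀, hp₀z⟩ := hp₀
  -- final descent : no improvement can happen late
  have desc : ∀ v t, TP p₀ ≤ t → J t ≤ v → False := by
    intro v
    induction v using Nat.strong_induction_on with
    | _ v ih =>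
      intro t ht hJv
      set m := J t with hmdef
      have hm : p₀ < m := hTPs p₀ t ht
      have hxm : X (t + 1) m = X t m + 1 := imp_incr (hImp t)
      have hzero : xstar m = 0 := hp₀z m hm
      set u₀ := max (t + 1) (TP m) with hu₀def
      have hXu₀ : X u₀ m = 0 := by
        rw [hfreeze m u₀ (le_max_right _ _), hzero]
      have h1 : 1 ≤ X (t + 1) m := by omega
      obtain ⟨u, hu1, hu2, hud⟩ := exists_decr (f := fun w => X w m) (t₁ := t + 1) (t₂ := u₀) h1 hXu₀ (le_max_left _ _)
      have hdl := imp_dec (hImp u) (hSk u) m hud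
      exact ih (J u) (by omega) u (by omega) le_rfl
  exact desc (J (TP p₀)) (TP p₀) le_rfl le_rfl

end CNSR


/-- Every c-nearly satisfying representation of a vector `v` (for weakly decreasing `c`
with `c_k = 1`) can be transformed into a c-satisfying representation of `v` by a
finite number of borrowing and carrying operations. -/
theorem cNSR_to_cSR
    (k : ℕ) (hk : 2 ≤ k) (c : ℕ → ℤ)
    (hc1 : 0 < c 1)
    (hdec : ∀ i, 1 ≤ i → i < k → c (i + 1) ≤ c i) (hck : c k = 1)
    (V : ℤ → Fin (k - 1) → ℤ)
    (hV0 : V 0 = 0)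
    (hVe : ∀ i : ℕ, 1 ≤ i → i ≤ k - 1 →
      V (-(i : ℤ)) = fun j : Fin (k - 1) => if (j : ℕ) + 1 = i then 1 else 0)
    (hVrec : ∀ n : ℤ, V n = ∑ l ∈ Finset.Icc 1 k, c l • V (n - (l : ℤ)))
    (v : Fin (k - 1) → ℤ) (a : ℕ → ℕ)
    (M : ℕ) (hsupp : ∀ n, M < n → a n = 0)
    (hrep : v = ∑ n ∈ Finset.Icc 1 M, (a n : ℤ) • V (-(n : ℤ)))
    -- `a` is a c-NSR: not a c-SR, but decrementing a single coefficient gives a c-SR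
    (hnot : ¬ IsSR k c a)
    (hnear : ∃ i, 1 ≤ i ∧ 1 ≤ a i ∧
      IsSR k c (fun n => if n = i then a n - 1 else a n)) :
    ∃ b : ℕ → ℕ,
      Relation.ReflTransGen
        (fun x y => ∃ i, CarryOp k c i x y ∨ BorrowOp k c i x y) a b ∧
      IsSR k c b ∧
      ∃ N : ℕ, (∀ n, N < n → b n = 0) ∧
        v = ∑ n ∈ Finset.Icc 1 N, (b n : ℤ) • V (-(n : ℤ)) := by
  have hsupp' : CNSR.Bdd M a := hsupp
  obtain ⟨b, N, hreach, hSR, hbdd, hval⟩ :=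
    CNSR.main_norm k c hk hdec hck V hVrec hV0 a M hsupp'
  refine ⟨b, hreach, hSR, N, hbdd, ?_⟩
  rw [hrep]
  exact hval.symm
end

section
/- In the special case c = (1, 1) (Fibonacci), every integer v ∈ Z has a unique representation v = Σ_{n≥1} a_n X_{-n} with a_n ∈ {0,1}, finitely many nonzero, and no two consecutive a_n equal to 1, where X_{-1} = 1, X_0 = 0 and X_n = X_{n-1} + X_{n-2} for all n ∈ Z (so X_{-n} = (-1)^{n+1} F_n with standard Fibonacci F_1 = F_2 = 1). -/
def fibZ (n : ℕ) : ℤ := (Nat.fib n : ℤ)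

def nf (n : ℕ) : ℤ := (-1 : ℤ)^(n+1) * Nat.fib n

def Mb (N : ℕ) : ℤ := if N % 2 = 1 then fibZ (N+1) else fibZ N
def Lb (N : ℕ) : ℤ := if N % 2 = 1 then 1 - fibZ N else 1 - fibZ (N+1)

lemma fibZ_add_two (n : ℕ) : fibZ (n+2) = fibZ n + fibZ (n+1) := by
  unfold fibZ; rw [Nat.fib_add_two]; push_cast; ring

lemma fibZ_nonneg (n : ℕ) : 0 ≤ fibZ n := Int.natCast_nonneg _

lemma fibZ_mono {m n : ℕ} (h : m ≤ n) : fibZ m ≤ fibZ n := by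
  unfold fibZ; exact_mod_cast Nat.fib_mono h

lemma nf_even {n : ℕ} (h : n % 2 = 0) : nf n = -fibZ n := by
  have ho : Odd (n+1) := by rw [Nat.odd_iff]; omega
  rw [nf, ho.neg_one_pow]; unfold fibZ; ring

lemma nf_odd {n : ℕ} (h : n % 2 = 1) : nf n = fibZ n := by
  have he : Even (n+1) := by rw [Nat.even_iff]; omega
  rw [nf, he.neg_one_pow]; unfold fibZ; ring

lemma nf_rec (n : ℕ) : nf (n+2) = nf n - nf (n+1) := by
  rcases Nat.even_or_odd n with h | h
  · rw [Nat.even_iff] at h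
    rw [nf_even h, nf_even (by omega : (n+2) % 2 = 0), nf_odd (by omega : (n+1) % 2 = 1),
      fibZ_add_two]
    ring
  · rw [Nat.odd_iff] at h
    rw [nf_odd h, nf_odd (by omega : (n+2) % 2 = 1), nf_even (by omega : (n+1) % 2 = 0),
      fibZ_add_two]
    ring

lemma Mb_succ (N : ℕ) : Mb N ≤ Mb (N+1) := by
  rcases Nat.even_or_odd N with h | h
  · rw [Nat.even_iff] at h
    simp only [Mb, if_neg (by omega : ¬ N % 2 = 1), if_pos (by omega : (N+1) % 2 = 1)]
    exact fibZ_mono (by omega)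
  · rw [Nat.odd_iff] at h
    simp only [Mb, if_pos h, if_neg (by omega : ¬ (N+1) % 2 = 1)]
    exact le_refl _

lemma Lb_succ (N : ℕ) : Lb (N+1) ≤ Lb N := by
  rcases Nat.even_or_odd N with h | h
  · rw [Nat.even_iff] at h
    simp only [Lb, if_neg (by omega : ¬ N % 2 = 1), if_pos (by omega : (N+1) % 2 = 1)]
    exact le_refl _
  · rw [Nat.odd_iff] at h
    simp only [Lb, if_pos h, if_neg (by omega : ¬ (N+1) % 2 = 1)]
    have := fibZ_mono (by omega : N ≤ N + 2)
    linarith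
-- step lemmas for bounds
lemma step1 : Lb 1 ≤ nf 1 + Lb 0 ∧ nf 1 + Mb 0 ≤ Mb 1 := by
  constructor <;> simp [Lb, Mb, nf, fibZ]

lemma step2 (n : ℕ) : Lb (n+2) ≤ nf (n+2) + Lb n ∧ nf (n+2) + Mb n ≤ Mb (n+2) := by
  have h2 := fibZ_add_two n
  have h3 := fibZ_add_two (n+1)
  have p0 := fibZ_nonneg n
  have p1 := fibZ_nonneg (n+1)
  rcases Nat.even_or_odd n with h | h
  · rw [Nat.even_iff] at h
    rw [nf_even (by omega : (n+2) % 2 = 0)]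
    simp only [Lb, Mb, if_neg (by omega : ¬ n % 2 = 1), if_neg (by omega : ¬ (n+2) % 2 = 1)]
    constructor <;> linarith
  · rw [Nat.odd_iff] at h
    rw [nf_odd (by omega : (n+2) % 2 = 1)]
    simp only [Lb, Mb, if_pos h, if_pos (by omega : (n+2) % 2 = 1)]
    constructor <;> linarith

lemma sum_bounds : ∀ N : ℕ, ∀ S : Finset ℕ, (∀ n ∈ S, 1 ≤ n) → (∀ n ∈ S, n + 1 ∉ S) →
    (∀ n ∈ S, n ≤ N) → Lb N ≤ ∑ n ∈ S, nf n ∧ ∑ n ∈ S, nf n ≤ Mb N := by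
  intro N
  induction N using Nat.strong_induction_on with
  | _ N IH =>
    intro S h1 hc hN
    match N with
    | 0 =>
      have hS : S = ∅ := Finset.eq_empty_of_forall_notMem (fun n hn => by
        have := h1 n hn; have := hN n hn; omega)
      simp [hS, Lb, Mb, fibZ]
    | (M+1) =>
      by_cases hmem : M + 1 ∈ S
      · -- S = insert (M+1) S'
        set S' : Finset ℕ := S.erase (M+1) with hS'
        have hM : M ∉ S := fun hMS => hc M hMS hmem
        have hS'bound : ∀ n ∈ S', n ≤ M + 1 - 2 := by
          intro n hn
          have hn' : n ∈ S := Finset.mem_of_mem_erase hn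
          have hne : n ≠ M + 1 := Finset.ne_of_mem_erase hn
          have := h1 n hn'; have := hN n hn'
          have : n ≠ M := fun h => hM (h ▸ hn')
          omega
        have hIH := IH (M + 1 - 2) (by omega) S'
          (fun n hn => h1 n (Finset.mem_of_mem_erase hn))
          (fun n hn hn2 => hc n (Finset.mem_of_mem_erase hn)
            (Finset.mem_of_mem_erase hn2) ) hS'bound
        have hsum : nf (M+1) + ∑ n ∈ S', nf n = ∑ n ∈ S, nf n :=
          Finset.add_sum_erase S nf hmem
        have hstep : Lb (M+1) ≤ nf (M+1) + Lb (M+1-2) ∧ nf (M+1) + Mb (M+1-2) ≤ Mb (M+1) := by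
          match M with
          | 0 => exact step1
          | (K+1) => exact step2 K
        exact ⟨by linarith [hIH.1], by linarith [hIH.2]⟩
      · have hN' : ∀ n ∈ S, n ≤ M := fun n hn => by
          have := hN n hn
          have : n ≠ M + 1 := fun h => hmem (h ▸ hn)
          omega
        have hIH := IH M (by omega) S h1 hc hN'
        exact ⟨le_trans (Lb_succ M) hIH.1, le_trans hIH.2 (Mb_succ M)⟩

lemma exists_rep : ∀ N : ℕ, ∀ v : ℤ, Lb N ≤ v → v ≤ Mb N →
    ∃ S : Finset ℕ, (∀ n ∈ S, 1 ≤ n) ∧ (∀ n ∈ S, n + 1 ∉ S) ∧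
      (∀ n ∈ S, n ≤ N) ∧ v = ∑ n ∈ S, nf n := by
  intro N
  induction N using Nat.strong_induction_on with
  | _ N IH =>
    intro v hl hu
    match N with
    | 0 =>
      have l0 : Lb 0 = 0 := by simp [Lb, fibZ]
      have m0 : Mb 0 = 0 := by simp [Mb, fibZ]
      refine ⟨∅, by simp, by simp, by simp, ?_⟩
      simp only [Finset.sum_empty]
      omega
    | (M+1) =>
      by_cases hin : Lb M ≤ v ∧ v ≤ Mb M
      · obtain ⟨S, a1, a2, a3, a4⟩ := IH M (by omega) v hin.1 hin.2
        exact ⟨S, a1, a2, fun n hn => le_trans (a3 n hn) (by omega), a4⟩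
      · -- v requires index M+1
        have hw : Lb (M+1-2) ≤ v - nf (M+1) ∧ v - nf (M+1) ≤ Mb (M+1-2) := by
          match M with
          | 0 =>
            have l1 : Lb (0+1) = 0 := by simp [Lb, fibZ]
            have m1 : Mb (0+1) = 1 := by simp [Mb, fibZ]
            have l0 : Lb 0 = 0 := by simp [Lb, fibZ]
            have m0 : Mb 0 = 0 := by simp [Mb, fibZ]
            have n1 : nf (0+1) = 1 := by norm_num [nf]
            rw [l1] at hl
            rw [m1] at hu
            rw [l0, m0] at hin
            have hidx : (0:ℕ)+1-2 = 0 := rfl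
            rw [hidx, l0, m0, n1]
            omega
          | (K+1) =>
            have h2 : fibZ (K+1+1) = fibZ K + fibZ (K+1) := fibZ_add_two K
            have h3 : fibZ (K+1+1+1) = fibZ (K+1) + fibZ (K+1+1) := fibZ_add_two (K+1)
            have p0 := fibZ_nonneg K
            have p1 := fibZ_nonneg (K+1)
            have hidx : K + 1 + 1 - 2 = K := by omega
            rw [hidx]
            rcases Nat.even_or_odd K with h | h
            · rw [Nat.even_iff] at h
              rw [nf_even (by omega : (K+1+1) % 2 = 0)]
              simp only [Lb, Mb, if_neg (by omega : ¬ K % 2 = 1),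
                if_neg (by omega : ¬ (K+1+1) % 2 = 1),
                if_pos (by omega : (K+1) % 2 = 1), not_and, not_le] at hl hu hin ⊢
              have hv : v < 1 - fibZ (K+1) := by
                by_contra hcon
                push_neg at hcon
                have := hin hcon
                omega
              constructor <;> omega
            · rw [Nat.odd_iff] at h
              rw [nf_odd (by omega : (K+1+1) % 2 = 1)]
              simp only [Lb, Mb, if_pos h, if_pos (by omega : (K+1+1) % 2 = 1),
                if_neg (by omega : ¬ (K+1) % 2 = 1), not_and, not_le] at hl hu hin ⊢
              have hv : fibZ (K+1) < v := hin hl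
              constructor <;> omega
        obtain ⟨S', a1, a2, a3, a4⟩ := IH (M+1-2) (by omega) (v - nf (M+1)) hw.1 hw.2
        have hnot : M + 1 ∉ S' := fun h => by have := a3 _ h; omega
        refine ⟨insert (M+1) S', ?_, ?_, ?_, ?_⟩
        · intro n hn
          rcases Finset.mem_insert.mp hn with rfl | hn'
          · omega
          · exact a1 n hn'
        · intro n hn
          rcases Finset.mem_insert.mp hn with rfl | hn'
          · intro hcon
            rcases Finset.mem_insert.mp hcon with h | h
            · omega
            · have := a3 _ h; omega
          · intro hcon
            rcases Finset.mem_insert.mp hcon with h | h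
            · have := a3 _ hn'; have := a1 _ hn'; omega
            · exact a2 n hn' h
        · intro n hn
          rcases Finset.mem_insert.mp hn with rfl | hn'
          · omega
          · have := a3 _ hn'; omega
        · rw [Finset.sum_insert hnot]
          linarith [a4]

lemma exists_rep_global (v : ℤ) :
    ∃ S : Finset ℕ, (∀ n ∈ S, 1 ≤ n) ∧ (∀ n ∈ S, n + 1 ∉ S) ∧ v = ∑ n ∈ S, nf n := by
  set N : ℕ := 2 * (v.natAbs + 5) with hN
  have h5 : (N : ℤ) ≤ fibZ N := by
    have := Nat.le_fib_self (by omega : 5 ≤ N)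
    unfold fibZ
    exact_mod_cast this
  have h6 : ((N:ℤ) + 1) ≤ fibZ (N+1) := by
    have := Nat.le_fib_self (by omega : 5 ≤ N + 1)
    unfold fibZ
    exact_mod_cast this
  have hl : Lb N ≤ v := by
    simp only [Lb, if_neg (by omega : ¬ N % 2 = 1)]
    omega
  have hu : v ≤ Mb N := by
    simp only [Mb, if_neg (by omega : ¬ N % 2 = 1)]
    omega
  obtain ⟨S, a1, a2, _, a4⟩ := exists_rep N v hl hu
  exact ⟨S, a1, a2, a4⟩

lemma sep (N : ℕ) (h1 : 1 ≤ N) :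
    (Mb (N-1) < nf N + Lb (N-2)) ∨ (nf N + Mb (N-2) < Lb (N-1)) := by
  match N with
  | 1 =>
    left
    norm_num [Mb, Lb, nf, fibZ]
  | (K+2) =>
    have h2 : fibZ (K+2) = fibZ K + fibZ (K+1) := fibZ_add_two K
    have p0 := fibZ_nonneg K
    have p1 := fibZ_nonneg (K+1)
    have hi1 : K + 2 - 1 = K + 1 := rfl
    have hi2 : K + 2 - 2 = K := rfl
    rw [hi1, hi2]
    rcases Nat.even_or_odd K with h | h
    · rw [Nat.even_iff] at h
      right
      rw [nf_even (by omega : (K+2) % 2 = 0)]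
      simp only [Lb, Mb, if_neg (by omega : ¬ K % 2 = 1),
        if_pos (by omega : (K+1) % 2 = 1)]
      omega
    · rw [Nat.odd_iff] at h
      left
      rw [nf_odd (by omega : (K+2) % 2 = 1)]
      simp only [Lb, Mb, if_pos h, if_neg (by omega : ¬ (K+1) % 2 = 1)]
      omega

lemma key (N : ℕ) (S T : Finset ℕ)
    (hS1 : ∀ n ∈ S, 1 ≤ n) (hSc : ∀ n ∈ S, n + 1 ∉ S) (hSN : ∀ n ∈ S, n ≤ N)
    (hT1 : ∀ n ∈ T, 1 ≤ n) (hTc : ∀ n ∈ T, n + 1 ∉ T) (hTN : ∀ n ∈ T, n ≤ N)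
    (hNS : N ∈ S) (hNT : N ∉ T) : ∑ n ∈ S, nf n ≠ ∑ n ∈ T, nf n := by
  have hN1 : 1 ≤ N := hS1 N hNS
  set S' : Finset ℕ := S.erase N with hS'
  have hMnotS : N - 1 ∉ S := fun hM => by
    have := hSc (N-1) hM
    have : N - 1 + 1 = N := by omega
    simp_all
  have hS'bound : ∀ n ∈ S', n ≤ N - 2 := by
    intro n hn
    have hn' : n ∈ S := Finset.mem_of_mem_erase hn
    have hne : n ≠ N := Finset.ne_of_mem_erase hn
    have := hS1 n hn'; have := hSN n hn'
    have : n ≠ N - 1 := fun h => hMnotS (h ▸ hn')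
    omega
  have hB := sum_bounds (N-2) S'
    (fun n hn => hS1 n (Finset.mem_of_mem_erase hn))
    (fun n hn hn2 => hSc n (Finset.mem_of_mem_erase hn) (Finset.mem_of_mem_erase hn2))
    hS'bound
  have hTbound : ∀ n ∈ T, n ≤ N - 1 := by
    intro n hn
    have := hTN n hn
    have : n ≠ N := fun h => hNT (h ▸ hn)
    omega
  have hBT := sum_bounds (N-1) T hT1 hTc hTbound
  have hsum : nf N + ∑ n ∈ S', nf n = ∑ n ∈ S, nf n := Finset.add_sum_erase S nf hNS
  rcases sep N hN1 with h | h
  · intro hcon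
    omega
  · intro hcon
    omega

lemma unique_rep (S T : Finset ℕ)
    (hS1 : ∀ n ∈ S, 1 ≤ n) (hSc : ∀ n ∈ S, n + 1 ∉ S)
    (hT1 : ∀ n ∈ T, 1 ≤ n) (hTc : ∀ n ∈ T, n + 1 ∉ T)
    (hsum : ∑ n ∈ S, nf n = ∑ n ∈ T, nf n) : S = T := by
  by_contra hne
  set D : Finset ℕ := (S \ T) ∪ (T \ S) with hD
  have hDne : D.Nonempty := by
    by_contra h
    rw [Finset.not_nonempty_iff_eq_empty] at h
    apply hne
    ext n
    have h1 : n ∉ D := h ▸ Finset.notMem_empty n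
    simp only [hD, Finset.mem_union, Finset.mem_sdiff, not_or, not_and, not_not] at h1
    exact ⟨h1.1, h1.2⟩
  set N : ℕ := D.max' hDne with hN
  have hNmem : N ∈ D := D.max'_mem hDne
  have hgt : ∀ n, N < n → (n ∈ S ↔ n ∈ T) := by
    intro n hn
    have hnD : n ∉ D := fun hmem => absurd (D.le_max' n hmem) (by omega)
    simp only [hD, Finset.mem_union, Finset.mem_sdiff, not_or, not_and, not_not] at hnD
    exact ⟨hnD.1, hnD.2⟩
  -- split sums at N
  have hsplit : ∀ U : Finset ℕ, ∑ n ∈ U.filter (· ≤ N), nf n + ∑ n ∈ U.filter (¬ · ≤ N), nf n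
      = ∑ n ∈ U, nf n := fun U => Finset.sum_filter_add_sum_filter_not U _ nf
  have hhi : S.filter (¬ · ≤ N) = T.filter (¬ · ≤ N) := by
    ext n
    simp only [Finset.mem_filter, not_le]
    constructor
    · rintro ⟨hs, hn⟩; exact ⟨(hgt n hn).mp hs, hn⟩
    · rintro ⟨ht, hn⟩; exact ⟨(hgt n hn).mpr ht, hn⟩
  have hlo : ∑ n ∈ S.filter (· ≤ N), nf n = ∑ n ∈ T.filter (· ≤ N), nf n := by
    have e1 := hsplit S
    have e2 := hsplit T
    rw [hhi] at e1
    omega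
  have hfS1 : ∀ n ∈ S.filter (· ≤ N), 1 ≤ n := fun n hn => hS1 n (Finset.mem_of_mem_filter _ hn)
  have hfT1 : ∀ n ∈ T.filter (· ≤ N), 1 ≤ n := fun n hn => hT1 n (Finset.mem_of_mem_filter _ hn)
  have hfSc : ∀ n ∈ S.filter (· ≤ N), n + 1 ∉ S.filter (· ≤ N) := fun n hn hc =>
    hSc n (Finset.mem_of_mem_filter _ hn) (Finset.mem_of_mem_filter _ hc)
  have hfTc : ∀ n ∈ T.filter (· ≤ N), n + 1 ∉ T.filter (· ≤ N) := fun n hn hc =>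
    hTc n (Finset.mem_of_mem_filter _ hn) (Finset.mem_of_mem_filter _ hc)
  have hfSN : ∀ n ∈ S.filter (· ≤ N), n ≤ N := fun n hn => (Finset.mem_filter.mp hn).2
  have hfTN : ∀ n ∈ T.filter (· ≤ N), n ≤ N := fun n hn => (Finset.mem_filter.mp hn).2
  rcases Finset.mem_union.mp hNmem with hcase | hcase
  · rcases Finset.mem_sdiff.mp hcase with ⟨hNS, hNT⟩
    exact key N (S.filter (· ≤ N)) (T.filter (· ≤ N)) hfS1 hfSc hfSN hfT1 hfTc hfTN
      (Finset.mem_filter.mpr ⟨hNS, le_refl N⟩)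
      (fun hc => hNT (Finset.mem_of_mem_filter _ hc)) hlo
  · rcases Finset.mem_sdiff.mp hcase with ⟨hNT, hNS⟩
    exact key N (T.filter (· ≤ N)) (S.filter (· ≤ N)) hfT1 hfTc hfTN hfS1 hfSc hfSN
      (Finset.mem_filter.mpr ⟨hNT, le_refl N⟩)
      (fun hc => hNS (Finset.mem_of_mem_filter _ hc)) hlo.symm

/-- Every integer has a unique representation as a sum of distinct nonconsecutive
terms X_{-n} (n ≥ 1), where X_0 = 0, X_{-1} = 1 and X_n = X_{n-1} + X_{n-2} for all
n ∈ ℤ (so X_{-n} = (-1)^{n+1} F_n). -/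
theorem zeckendorf_integers
    (X : ℤ → ℤ) (hX0 : X 0 = 0) (hX1 : X (-1) = 1)
    (hXrec : ∀ n : ℤ, X n = X (n - 1) + X (n - 2)) :
    ∀ v : ℤ,
      ∃! S : Finset ℕ, (∀ n ∈ S, 1 ≤ n) ∧ (∀ n ∈ S, n + 1 ∉ S) ∧
        v = ∑ n ∈ S, X (-(n : ℤ)) := by
  have hXnf : ∀ n : ℕ, X (-(n : ℤ)) = nf n := by
    intro n
    induction n using Nat.strong_induction_on with
    | _ n IH =>
      match n with
      | 0 => simpa [nf] using hX0
      | 1 => simpa [nf] using hX1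
      | (k+2) =>
        have hr := hXrec (-(k : ℤ))
        have e1 : -(k : ℤ) - 1 = -((k+1 : ℕ) : ℤ) := by push_cast; ring
        have e2 : -(k : ℤ) - 2 = -((k+2 : ℕ) : ℤ) := by push_cast; ring
        rw [e1, e2] at hr
        have h0 := IH k (by omega)
        have h1 := IH (k+1) (by omega)
        rw [h0, h1] at hr
        rw [nf_rec k]
        omega
  intro v
  obtain ⟨S, a1, a2, a3⟩ := exists_rep_global v
  refine ⟨S, ⟨a1, a2, ?_⟩, ?_⟩
  · rw [a3]
    exact (Finset.sum_congr rfl (fun n _ => hXnf n)).symm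
  · rintro T ⟨b1, b2, b3⟩
    apply unique_rep T S b1 b2 a1 a2
    rw [← a3, b3]
    exact Finset.sum_congr rfl (fun n _ => (hXnf n).symm)
end

section
/- Let c be weakly decreasing with c_k = 1 and define D_n = { v ∈ Z^{k-1} : v = Σ_{i=1}^n a_i X_{-i} for some c-satisfying representation (a_i)_{i=1}^n }. Then the cardinality of D_n equals X_{n+1}, the (n+1)-st term of the associated scalar PLRS. -/
namespace SRaux

variable {k : ℕ} {c : ℕ → ℤ}

lemma isSR_ext {a : ℕ → ℕ} (h : IsSR k c a) :
    ∀ b : ℕ → ℕ, (∀ i, 1 ≤ i → a i = b i) → IsSR k c b := by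
  induction h with
  | zero a h =>
    exact fun b hab => .zero b (fun n hn => (hab n hn) ▸ h n hn)
  | cprefix a m h1 h2 h3 h4 =>
    exact fun b hab => .cprefix b m h1 h2
      (fun n hn hnm => (hab n hn) ▸ h3 n hn hnm)
      (fun n hn => (hab n (by omega)) ▸ h4 n hn)
  | chunk a s ℓ hs1 hs2 h1 h2 h3 h4 ih =>
    exact fun b hab => .chunk b s ℓ hs1 hs2
      (fun n hn hns => (hab n hn) ▸ h1 n hn hns)
      ((hab s hs1) ▸ h2)
      (fun i hi hil => (hab (s + i) (by omega)) ▸ h3 i hi hil)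
      (ih _ (fun i hi => hab (s + ℓ + i) (by omega)))

lemma isSR_pad (hk : 1 ≤ k) (hc1 : 0 < c 1) {t : ℕ → ℕ} (ht : IsSR k c t) (b : ℕ → ℕ) (ℓ : ℕ)
    (h0 : ∀ i, 1 ≤ i → i ≤ ℓ → b i = 0) (h1 : ∀ i, 1 ≤ i → b (ℓ + i) = t i) :
    IsSR k c b := by
  rcases Nat.eq_zero_or_pos ℓ with rfl | hl
  · refine isSR_ext ht b (fun i hi => ?_)
    have := (h1 i hi).symm
    rwa [Nat.zero_add] at this
  · refine .chunk b 1 (ℓ - 1) le_rfl hk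
      (fun n hn hns => by omega) ?_ (fun i hi hil => h0 (1 + i) (by omega) (by omega)) ?_
    · have := h0 1 le_rfl hl
      simpa [this] using hc1
    · refine isSR_ext ht _ (fun i hi => ?_)
      show t i = b (1 + (ℓ - 1) + i)
      rw [show 1 + (ℓ - 1) + i = ℓ + i from by omega]
      exact (h1 i hi).symm


lemma isSR_block (hk : 1 ≤ k) (hc1 : 0 < c 1) (hc : ∀ i, 1 ≤ i → i ≤ k → 0 < c i)
    {a : ℕ → ℕ} (h : IsSR k c a) :
    ∃ s, 1 ≤ s ∧ s ≤ k ∧ (∀ i, 1 ≤ i → i < s → (a i : ℤ) = c i) ∧ ((a s : ℤ) < c s) ∧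
      IsSR k c (fun x => a (s + x)) := by
  induction h with
  | zero a h =>
    refine ⟨1, le_rfl, hk, fun i hi his => by omega, ?_, ?_⟩
    · simpa [h 1 le_rfl] using hc1
    · exact .zero _ (fun n hn => h (1 + n) (by omega))
  | cprefix a m h1 h2 h3 h4 =>
    refine ⟨m + 1, by omega, by omega, fun i hi him => h3 i hi (by omega), ?_, ?_⟩
    · simpa [h4 (m + 1) (by omega)] using hc (m + 1) (by omega) (by omega)
    · exact .zero _ (fun n hn => h4 (m + 1 + n) (by omega))
  | chunk a s ℓ hs1 hs2 h1 h2 h3 h4 ih =>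
    refine ⟨s, hs1, hs2, h1, h2, ?_⟩
    refine isSR_pad hk hc1 h4 _ ℓ (fun i hi hil => h3 i hi hil) (fun i hi => ?_)
    exact congrArg a (Nat.add_assoc s ℓ i).symm


/-- weighted value of a digit string -/
def val (Xs : ℕ → ℤ) (n : ℕ) (a : ℕ → ℕ) : ℤ :=
  ∑ i ∈ Finset.Icc 1 n, (a i : ℤ) * Xs (n + 1 - i)

/-- partial sums of the "greedy" boundaries -/
def G (c Xs : ℕ → ℤ) (n s : ℕ) (d : ℤ) : ℤ :=
  (∑ i ∈ Finset.Ico 1 s, c i * Xs (n + 1 - i)) + d * Xs (n + 1 - s)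

lemma icc_eq_ioc (n : ℕ) : Finset.Icc 1 n = Finset.Ioc 0 n := by
  ext x; simp [Nat.lt_iff_add_one_le]

lemma val_congr {Xs : ℕ → ℤ} {n : ℕ} {a b : ℕ → ℕ} (h : ∀ i, 1 ≤ i → a i = b i) :
    val Xs n a = val Xs n b := by
  refine Finset.sum_congr rfl (fun i hi => ?_)
  rw [Finset.mem_Icc] at hi
  rw [h i hi.1]

lemma val_nonneg {Xs : ℕ → ℤ} (hXpos : ∀ m, 1 ≤ m → 0 < Xs m) (n : ℕ) (a : ℕ → ℕ) :
    0 ≤ val Xs n a := by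
  refine Finset.sum_nonneg (fun i hi => ?_)
  rw [Finset.mem_Icc] at hi
  exact mul_nonneg (by positivity) (le_of_lt (hXpos _ (by omega)))

lemma val_split (Xs : ℕ → ℤ) {n s : ℕ} (hs : s ≤ n) (a : ℕ → ℕ) :
    val Xs n a = (∑ i ∈ Finset.Icc 1 s, (a i : ℤ) * Xs (n + 1 - i))
      + val Xs (n - s) (fun x => a (s + x)) := by
  unfold val
  rw [icc_eq_ioc, icc_eq_ioc, icc_eq_ioc]
  rw [← Finset.sum_Ioc_consecutive _ (Nat.zero_le s) hs]
  congr 1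
  refine Finset.sum_nbij' (fun i => i - s) (fun j => s + j) ?_ ?_ ?_ ?_ ?_
  · intro i hi; simp only [Finset.mem_Ioc] at *; omega
  · intro j hj; simp only [Finset.mem_Ioc] at *; omega
  · intro i hi; simp only [Finset.mem_Ioc] at *; omega
  · intro j hj; simp only [Finset.mem_Ioc] at *; omega
  · intro i hi
    simp only [Finset.mem_Ioc] at hi
    simp only []
    rw [show s + (i - s) = i from by omega, show n - s + 1 - (i - s) = n + 1 - i from by omega]

lemma sum_head (Xs : ℕ → ℤ) (n : ℕ) (a : ℕ → ℕ) {s : ℕ} (hs : 1 ≤ s) :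
    (∑ i ∈ Finset.Icc 1 s, (a i : ℤ) * Xs (n + 1 - i))
      = (∑ i ∈ Finset.Ico 1 s, (a i : ℤ) * Xs (n + 1 - i)) + (a s : ℤ) * Xs (n + 1 - s) := by
  rw [← Finset.Ico_add_one_right_eq_Icc, Finset.sum_Ico_succ_top (by omega)]


lemma c_pos {k : ℕ} {c : ℕ → ℤ}
    (hdec : ∀ i, 1 ≤ i → i < k → c (i + 1) ≤ c i) (hck : c k = 1) :
    ∀ i, 1 ≤ i → i ≤ k → 0 < c i := by
  have key : ∀ d i, 1 ≤ i → i + d = k → 0 < c i := by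
    intro d
    induction d with
    | zero => intro i hi h; simp only [Nat.add_zero] at h; rw [h, hck]; norm_num
    | succ d ih =>
      intro i hi h
      have h1 := hdec i hi (by omega)
      have h2 := ih (i + 1) (by omega) (by omega)
      linarith
  exact fun i hi hik => key (k - i) i hi (by omega)

lemma Xs_pos {k : ℕ} {c : ℕ → ℤ} {Xs : ℕ → ℤ} (hk : 2 ≤ k)
    (hc : ∀ i, 1 ≤ i → i ≤ k → 0 < c i) (hXs1 : Xs 1 = 1)
    (hXsinit : ∀ n, 2 ≤ n → n ≤ k →
      Xs n = (∑ i ∈ Finset.Icc 1 (n - 1), c i * Xs (n - i)) + 1)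
    (hXsrec : ∀ n, k < n → Xs n = ∑ i ∈ Finset.Icc 1 k, c i * Xs (n - i)) :
    ∀ n, 1 ≤ n → 0 < Xs n := by
  intro n
  induction n using Nat.strong_induction_on with
  | _ n ih =>
    intro hn
    rcases Nat.lt_or_ge n 2 with h2 | h2
    · have : n = 1 := by omega
      rw [this, hXs1]; norm_num
    rcases le_or_gt n k with hnk | hnk
    · rw [hXsinit n h2 hnk]
      have : 0 ≤ ∑ i ∈ Finset.Icc 1 (n - 1), c i * Xs (n - i) := by
        refine Finset.sum_nonneg (fun i hi => ?_)
        simp only [Finset.mem_Icc] at hi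
        exact mul_nonneg (le_of_lt (hc i hi.1 (by omega)))
          (le_of_lt (ih (n - i) (by omega) (by omega)))
      linarith
    · rw [hXsrec n hnk]
      refine Finset.sum_pos' (fun i hi => ?_) ⟨k, ?_, ?_⟩
      · simp only [Finset.mem_Icc] at hi
        exact mul_nonneg (le_of_lt (hc i hi.1 hi.2))
          (le_of_lt (ih (n - i) (by omega) (by omega)))
      · simp only [Finset.mem_Icc]; omega
      · exact mul_pos (hc k (by omega) le_rfl) (ih (n - k) (by omega) (by omega))

lemma Xs_lt_succ {k : ℕ} {c : ℕ → ℤ} {Xs : ℕ → ℤ} (hk : 2 ≤ k)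
    (hc : ∀ i, 1 ≤ i → i ≤ k → 0 < c i)
    (hXpos : ∀ n, 1 ≤ n → 0 < Xs n)
    (hXsinit : ∀ n, 2 ≤ n → n ≤ k →
      Xs n = (∑ i ∈ Finset.Icc 1 (n - 1), c i * Xs (n - i)) + 1)
    (hXsrec : ∀ n, k < n → Xs n = ∑ i ∈ Finset.Icc 1 k, c i * Xs (n - i)) :
    ∀ n, 1 ≤ n → Xs n < Xs (n + 1) := by
  intro n hn
  rcases le_or_gt (n + 1) k with hnk | hnk
  · rw [hXsinit (n + 1) (by omega) hnk]
    have hsum : c 1 * Xs (n + 1 - 1) ≤ ∑ i ∈ Finset.Icc 1 (n + 1 - 1), c i * Xs (n + 1 - i) := by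
      refine Finset.single_le_sum (f := fun i => c i * Xs (n + 1 - i)) (fun i hi => ?_) ?_
      · simp only [Finset.mem_Icc] at hi
        exact mul_nonneg (le_of_lt (hc i hi.1 (by omega))) (le_of_lt (hXpos _ (by omega)))
      · simp only [Finset.mem_Icc]; omega
    have h1 : Xs n ≤ c 1 * Xs (n + 1 - 1) := by
      have hc1 : 1 ≤ c 1 := hc 1 le_rfl (by omega)
      have := hXpos n hn
      simp only [Nat.add_sub_cancel]
      nlinarith
    simp only [Nat.add_sub_cancel] at *
    linarith
  · rw [hXsrec (n + 1) hnk]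
    have hsub : ({1, k} : Finset ℕ) ⊆ Finset.Icc 1 k := by
      intro x hx; simp only [Finset.mem_insert, Finset.mem_singleton] at hx
      simp only [Finset.mem_Icc]; omega
    have hpair : ∑ i ∈ ({1, k} : Finset ℕ), c i * Xs (n + 1 - i)
        ≤ ∑ i ∈ Finset.Icc 1 k, c i * Xs (n + 1 - i) := by
      refine Finset.sum_le_sum_of_subset_of_nonneg hsub (fun i hi _ => ?_)
      simp only [Finset.mem_Icc] at hi
      exact mul_nonneg (le_of_lt (hc i hi.1 hi.2)) (le_of_lt (hXpos _ (by omega)))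
    rw [Finset.sum_pair (by omega : (1:ℕ) ≠ k)] at hpair
    have hc1 : 1 ≤ c 1 := hc 1 le_rfl (by omega)
    have hx1 : 0 < Xs (n + 1 - 1) := hXpos _ (by omega)
    have hxk : 0 < Xs (n + 1 - k) := hXpos _ (by omega)
    have hck1 : 1 ≤ c k := hc k (by omega) le_rfl
    simp only [Nat.add_sub_cancel] at *
    nlinarith


lemma Xs_mono {k : ℕ} {c Xs : ℕ → ℤ} (hk : 2 ≤ k)
    (hc : ∀ i, 1 ≤ i → i ≤ k → 0 < c i)
    (hXpos : ∀ n, 1 ≤ n → 0 < Xs n)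
    (hXsinit : ∀ n, 2 ≤ n → n ≤ k →
      Xs n = (∑ i ∈ Finset.Icc 1 (n - 1), c i * Xs (n - i)) + 1)
    (hXsrec : ∀ n, k < n → Xs n = ∑ i ∈ Finset.Icc 1 k, c i * Xs (n - i)) :
    ∀ m n, 1 ≤ m → m ≤ n → Xs m ≤ Xs n := by
  intro m n hm hmn
  induction n, hmn using Nat.le_induction with
  | base => exact le_refl _
  | succ n hn ihn =>
    have := Xs_lt_succ hk hc hXpos hXsinit hXsrec n (by omega)
    linarith

lemma G_zero (c Xs : ℕ → ℤ) (n s : ℕ) :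
    G c Xs n s 0 = ∑ i ∈ Finset.Ico 1 s, c i * Xs (n + 1 - i) := by simp [G]

lemma G_succ_d (c Xs : ℕ → ℤ) (n s : ℕ) (d : ℤ) :
    G c Xs n s (d + 1) = G c Xs n s d + Xs (n + 1 - s) := by simp [G]; ring


lemma master {k : ℕ} {c Xs : ℕ → ℤ} (hk : 2 ≤ k)
    (hc : ∀ i, 1 ≤ i → i ≤ k → 0 < c i)
    (hXs1 : Xs 1 = 1)
    (hXpos : ∀ n, 1 ≤ n → 0 < Xs n)
    (hXsinit : ∀ n, 2 ≤ n → n ≤ k →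
      Xs n = (∑ i ∈ Finset.Icc 1 (n - 1), c i * Xs (n - i)) + 1)
    (hXsrec : ∀ n, k < n → Xs n = ∑ i ∈ Finset.Icc 1 k, c i * Xs (n - i)) :
    ∀ n : ℕ,
      (∀ a, IsSR k c a → (∀ j, n < j → a j = 0) → val Xs n a ≤ Xs (n + 1) - 1) ∧
      (∀ a b, IsSR k c a → IsSR k c b → (∀ j, n < j → a j = 0) → (∀ j, n < j → b j = 0) →
        val Xs n a = val Xs n b → ∀ i, 1 ≤ i → a i = b i) ∧
      (∀ N : ℤ, 0 ≤ N → N < Xs (n + 1) →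
        ∃ a, IsSR k c a ∧ (∀ j, n < j → a j = 0) ∧ val Xs n a = N) := by
  have hc1 : 0 < c 1 := hc 1 le_rfl (by omega)
  intro n
  induction n using Nat.strong_induction_on with
  | _ n ih =>
  have hicc0 : Finset.Icc 1 0 = (∅ : Finset ℕ) := Finset.Icc_eq_empty (by omega)
  have hval0 : ∀ g : ℕ → ℕ, val Xs 0 g = 0 := by
    intro g; unfold val; rw [hicc0, Finset.sum_empty]
  rcases Nat.eq_zero_or_pos n with rfl | hn
  · refine ⟨?_, ?_, ?_⟩
    · intro a _ _; rw [hval0, hXs1]; norm_num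
    · intro a b _ _ hsa hsb _ i hi; rw [hsa i (by omega), hsb i (by omega)]
    · intro N h0 h1
      rw [hXs1] at h1
      have : N = 0 := by omega
      exact ⟨fun _ => 0, .zero _ (fun _ _ => rfl), fun _ _ => rfl, by rw [hval0, this]⟩
  -- n ≥ 1 from here on
  have hGmono_d : ∀ s : ℕ, s ≤ n → ∀ d e : ℤ, d ≤ e → G c Xs n s d ≤ G c Xs n s e := by
    intro s h2 d e hde
    have hx : 0 < Xs (n + 1 - s) := hXpos _ (by omega)
    have := mul_le_mul_of_nonneg_right hde (le_of_lt hx)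
    unfold G; linarith
  have hGstep : ∀ s : ℕ, 1 ≤ s → G c Xs n s (c s) = G c Xs n (s + 1) 0 := by
    intro s h1
    unfold G
    rw [Finset.sum_Ico_succ_top (by omega : 1 ≤ s)]
    ring
  have hGmono_s : ∀ s t : ℕ, s ≤ t → t ≤ min k n + 1 → G c Xs n s 0 ≤ G c Xs n t 0 := by
    intro s t hst htm
    rw [G_zero, G_zero]
    refine Finset.sum_le_sum_of_subset_of_nonneg (by apply Finset.Ico_subset_Ico le_rfl hst) ?_
    intro i hi _
    simp only [Finset.mem_Ico] at hi
    exact mul_nonneg (le_of_lt (hc i hi.1 (by omega))) (le_of_lt (hXpos _ (by omega)))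
  have hGtop : G c Xs n (min k n + 1) 0 = if n + 1 ≤ k then Xs (n + 1) - 1 else Xs (n + 1) := by
    rcases le_or_gt (n + 1) k with h | h
    · have hmin : min k n = n := by omega
      rw [hmin, if_pos h, G_zero, Finset.Ico_add_one_right_eq_Icc]
      have h2 := hXsinit (n + 1) (by omega) h
      simp only [Nat.add_sub_cancel] at h2
      linarith
    · have hmin : min k n = k := by omega
      rw [hmin, if_neg (by omega), G_zero, Finset.Ico_add_one_right_eq_Icc]
      have h2 := hXsrec (n + 1) h
      linarith
  have hGtople : G c Xs n (min k n + 1) 0 ≤ Xs (n + 1) := by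
    rw [hGtop]; split <;> linarith
  -- block decomposition with value identity
  have hblock : ∀ a, IsSR k c a → (∀ j, n < j → a j = 0) →
      ∃ s, 1 ≤ s ∧ s ≤ k ∧ s ≤ n + 1 ∧ (∀ i, 1 ≤ i → i < s → (a i : ℤ) = c i) ∧
        ((a s : ℤ) < c s) ∧ IsSR k c (fun x => a (s + x)) ∧
        (∀ j, n - s < j → a (s + j) = 0) ∧
        val Xs n a = G c Xs n s ((a s : ℤ)) + val Xs (n - s) (fun x => a (s + x)) := by
    intro a hSR hsupp
    obtain ⟨s, hs1, hsk, hpre, hdlt, hsh⟩ := isSR_block (by omega) hc1 hc hSR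
    have hsn1 : s ≤ n + 1 := by
      by_contra hcon
      push_neg at hcon
      have h1 := hpre (n + 1) (by omega) (by omega)
      have h2 := hsupp (n + 1) (by omega)
      have h3 := hc (n + 1) (by omega) (by omega)
      rw [h2] at h1
      simp only [Nat.cast_zero] at h1
      linarith
    refine ⟨s, hs1, hsk, hsn1, hpre, hdlt, hsh, ?_, ?_⟩
    · intro j hj; exact hsupp (s + j) (by omega)
    · rcases Nat.lt_or_ge n s with hcase | hcase
      · have hseq : s = n + 1 := by omega
        subst hseq
        have hvz : val Xs (n - (n + 1)) (fun x => a (n + 1 + x)) = 0 := by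
          rw [show n - (n + 1) = 0 from by omega, hval0]
        rw [hvz, add_zero]
        have ha0 : a (n + 1) = 0 := hsupp _ (by omega)
        rw [ha0]
        unfold val G
        push_cast
        rw [zero_mul, add_zero, Finset.Ico_add_one_right_eq_Icc]
        refine Finset.sum_congr rfl (fun i hi => ?_)
        simp only [Finset.mem_Icc] at hi
        rw [hpre i hi.1 (by omega)]
      · rw [val_split Xs hcase a, sum_head Xs n a hs1]
        unfold G
        have hcongr : ∑ i ∈ Finset.Ico 1 s, (a i : ℤ) * Xs (n + 1 - i)
            = ∑ i ∈ Finset.Ico 1 s, c i * Xs (n + 1 - i) := by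
          refine Finset.sum_congr rfl (fun i hi => ?_)
          simp only [Finset.mem_Ico] at hi
          rw [hpre i hi.1 hi.2]
        rw [hcongr]
  -- upper bound for blocks with s ≤ n
  have hub' : ∀ a, IsSR k c a → (∀ j, n < j → a j = 0) →
      ∀ s, 1 ≤ s → s ≤ n → ((a s : ℤ) < c s) →
      val Xs n a = G c Xs n s ((a s : ℤ)) + val Xs (n - s) (fun x => a (s + x)) →
      IsSR k c (fun x => a (s + x)) → (∀ j, n - s < j → a (s + j) = 0) →
      val Xs n a ≤ G c Xs n s ((a s : ℤ) + 1) - 1 := by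
    intro a hSR hsupp s hs1 hsn hdlt heq hSRsh hsuppsh
    have hR := ((ih (n - s) (by omega)).1) _ hSRsh hsuppsh
    have hx : Xs (n - s + 1) = Xs (n + 1 - s) := by congr 1; omega
    rw [G_succ_d]
    rw [hx] at hR
    linarith
  refine ⟨?_, ?_, ?_⟩
  · -- UB
    intro a hSR hsupp
    obtain ⟨s, hs1, hsk, hsn1, hpre, hdlt, hSRsh, hsuppsh, heq⟩ := hblock a hSR hsupp
    rcases Nat.lt_or_ge n s with hcase | hcase
    · -- s = n + 1
      have hseq : s = n + 1 := by omega
      subst hseq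
      have ha0 : a (n + 1) = 0 := hsupp _ (by omega)
      have hvz : val Xs (n - (n + 1)) (fun x => a (n + 1 + x)) = 0 := by
        have : n - (n + 1) = 0 := by omega
        rw [this, hval0]
      rw [heq, hvz, ha0]
      have hmin : min k n = n := by omega
      have h2 := hGtop
      rw [hmin, if_pos (by omega)] at h2
      push_cast
      linarith
    · -- s ≤ n
      have h1 := hub' a hSR hsupp s hs1 hcase hdlt heq hSRsh hsuppsh
      have h2 : G c Xs n s ((a s : ℤ) + 1) ≤ G c Xs n s (c s) := hGmono_d s hcase _ _ (by linarith)
      have h3 : G c Xs n (s + 1) 0 ≤ G c Xs n (min k n + 1) 0 := hGmono_s _ _ (by omega) le_rfl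
      rw [hGstep s hs1] at h2
      linarith
  · -- UNIQ
    intro a b hSRa hSRb hsa hsb hval
    obtain ⟨s, hs1, hsk, hsn1, hprea, hdlta, hsha, hsupa, heqa⟩ := hblock a hSRa hsa
    obtain ⟨t, ht1, htk, htn1, hpreb, hdltb, hshb, hsupb, heqb⟩ := hblock b hSRb hsb
    have hlowa : G c Xs n s ((a s : ℤ)) ≤ val Xs n a := by
      have := val_nonneg hXpos (n - s) (fun x => a (s + x)); linarith [heqa]
    have hlowb : G c Xs n t ((b t : ℤ)) ≤ val Xs n b := by
      have := val_nonneg hXpos (n - t) (fun x => b (t + x)); linarith [heqb]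
    have key : ∀ (x y : ℕ → ℕ) (s t : ℕ), 1 ≤ s → s ≤ k → s ≤ n → 1 ≤ t → t ≤ k → t ≤ n + 1 →
        ((x s : ℤ) < c s) →
        val Xs n x ≤ G c Xs n s ((x s : ℤ) + 1) - 1 →
        G c Xs n t ((y t : ℤ)) ≤ val Xs n y →
        (t = n + 1 → (y t : ℤ) = 0) →
        (s < t ∨ (s = t ∧ (x s : ℤ) < (y t : ℤ))) → val Xs n x < val Xs n y := by
      intro x y s t hs1' hsk' hsn' ht1' htk' htn1' hdx hux hly hytop hlex
      have hmain : G c Xs n s ((x s : ℤ) + 1) ≤ G c Xs n t ((y t : ℤ)) := by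
        rcases hlex with hst | ⟨rfl, hde⟩
        · have h2 : G c Xs n s ((x s : ℤ) + 1) ≤ G c Xs n s (c s) :=
            hGmono_d s hsn' _ _ (by linarith)
          rw [hGstep s hs1'] at h2
          have h3 : G c Xs n (s + 1) 0 ≤ G c Xs n t 0 := hGmono_s _ _ (by omega) (by omega)
          have h4 : G c Xs n t 0 ≤ G c Xs n t ((y t : ℤ)) := by
            rcases Nat.lt_or_ge n t with hc2 | hc2
            · rw [hytop (by omega)]
            · exact hGmono_d t hc2 _ _ (Nat.cast_nonneg _)
          linarith
        · rcases Nat.lt_or_ge n s with hc2 | hc2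
          · exfalso
            rw [hytop (by omega)] at hde
            have : (0 : ℤ) ≤ (x s : ℤ) := Nat.cast_nonneg _
            linarith
          · exact hGmono_d s hc2 _ _ (by linarith)
      linarith
    have hbtop : t = n + 1 → (b t : ℤ) = 0 := by
      intro h; rw [h, hsb (n + 1) (by omega)]; simp
    have hatop : s = n + 1 → (a s : ℤ) = 0 := by
      intro h; rw [h, hsa (n + 1) (by omega)]; simp
    rcases lt_trichotomy s t with hst | hst | hst
    · exfalso
      have hsn : s ≤ n := by omega
      have hux := hub' a hSRa hsa s hs1 hsn hdlta heqa hsha hsupa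
      have := key a b s t hs1 hsk hsn ht1 htk htn1 hdlta hux hlowb hbtop (Or.inl hst)
      linarith
    · subst hst
      rcases lt_trichotomy ((a s : ℤ)) ((b s : ℤ)) with hd | hd | hd
      · exfalso
        rcases le_or_gt s n with hsn | hsn
        · have hux := hub' a hSRa hsa s hs1 hsn hdlta heqa hsha hsupa
          have := key a b s s hs1 hsk hsn ht1 htk htn1 hdlta hux hlowb hbtop (Or.inr ⟨rfl, hd⟩)
          linarith
        · rw [hatop (by omega), hbtop (by omega)] at hd
          exact lt_irrefl _ hd
      · -- main path
        have hab : a s = b s := Nat.cast_inj.mp hd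
        intro i hi
        rcases lt_trichotomy i s with hil | hie | hig
        · exact Nat.cast_inj.mp ((hprea i hi hil).trans (hpreb i hi hil).symm)
        · rw [hie]; exact hab
        · rcases le_or_gt s n with hsn | hsn
          · have hre : val Xs (n - s) (fun x => a (s + x)) = val Xs (n - s) (fun x => b (s + x)) := by
              rw [heqa, heqb, hd] at hval
              linarith
            have h7 := (ih (n - s) (by omega)).2.1 _ _ hsha hshb hsupa hsupb hre (i - s) (by omega)
            rwa [show s + (i - s) = i from by omega] at h7
          · rw [hsa i (by omega), hsb i (by omega)]
      · exfalso
        rcases le_or_gt s n with hsn | hsn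
        · have hux := hub' b hSRb hsb s ht1 hsn hdltb heqb hshb hsupb
          have := key b a s s ht1 htk hsn hs1 hsk hsn1 hdltb hux hlowa hatop (Or.inr ⟨rfl, hd⟩)
          linarith
        · rw [hatop (by omega), hbtop (by omega)] at hd
          exact lt_irrefl _ hd
    · exfalso
      have htn : t ≤ n := by omega
      have hux := hub' b hSRb hsb t ht1 htn hdltb heqb hshb hsupb
      have := key b a t s ht1 htk htn hs1 hsk hsn1 hdltb hux hlowa hatop (Or.inl hst)
      linarith
  · -- EXIST
    intro N hN0 hNub
    have hfind : ∀ M : ℕ, M ≤ min k n → ∀ N : ℤ, 0 ≤ N → N < G c Xs n (M + 1) 0 →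
        1 ≤ M → ∃ s, 1 ≤ s ∧ s ≤ M ∧ G c Xs n s 0 ≤ N ∧ N < G c Xs n (s + 1) 0 := by
      intro M
      induction M with
      | zero => intro _ _ _ _ h; omega
      | succ M ihM =>
        intro hMle N h0 hup _
        rcases Nat.eq_zero_or_pos M with rfl | hM1
        · refine ⟨1, le_rfl, le_rfl, ?_, hup⟩
          rw [G_zero, Finset.Ico_self, Finset.sum_empty]
          exact h0
        · rcases lt_or_ge N (G c Xs n (M + 1) 0) with h | h
          · obtain ⟨s, a1, a2, a3, a4⟩ := ihM (by omega) N h0 h hM1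
            exact ⟨s, a1, by omega, a3, a4⟩
          · exact ⟨M + 1, by omega, le_rfl, h, hup⟩
    by_cases htop : n + 1 ≤ k ∧ N = Xs (n + 1) - 1
    · -- the full-prefix string
      obtain ⟨hk1, hNeq⟩ := htop
      refine ⟨fun i => if 1 ≤ i ∧ i ≤ n then (c i).toNat else 0, ?_, ?_, ?_⟩
      · refine .cprefix _ n hn (by omega) (fun i hi him => ?_) (fun i hig => ?_)
        · rw [if_pos ⟨hi, him⟩]; exact Int.toNat_of_nonneg (le_of_lt (hc i hi (by omega)))
        · show (if 1 ≤ i ∧ i ≤ n then (c i).toNat else 0) = 0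
          rw [if_neg (by omega)]
      · intro j hj
        show (if 1 ≤ j ∧ j ≤ n then (c j).toNat else 0) = 0
        rw [if_neg (by omega)]
      · have h2 := hXsinit (n + 1) (by omega) hk1
        simp only [Nat.add_sub_cancel] at h2
        have h3 : val Xs n (fun i => if 1 ≤ i ∧ i ≤ n then (c i).toNat else 0)
            = ∑ i ∈ Finset.Icc 1 n, c i * Xs (n + 1 - i) := by
          refine Finset.sum_congr rfl (fun i hi => ?_)
          simp only [Finset.mem_Icc] at hi
          simp only [if_pos (And.intro hi.1 hi.2)]
          rw [Int.toNat_of_nonneg (le_of_lt (hc i hi.1 (by omega)))]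
        rw [h3, hNeq]
        linarith
    · -- generic block
      have hNlt : N < G c Xs n (min k n + 1) 0 := by
        rw [hGtop]
        split
        · rename_i h
          have hne : N ≠ Xs (n + 1) - 1 := fun hcon => htop ⟨h, hcon⟩
          omega
        · exact hNub
      obtain ⟨s, hs1, hsM, hlow, hup⟩ := hfind (min k n) le_rfl N hN0 hNlt (by omega)
      have hsn : s ≤ n := by omega
      have hXp : 0 < Xs (n + 1 - s) := hXpos _ (by omega)
      have hstep : G c Xs n (s + 1) 0 = G c Xs n s 0 + c s * Xs (n + 1 - s) := by
        rw [← hGstep s hs1]; unfold G; ring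
      have hdR : ∃ d R : ℤ, 0 ≤ d ∧ d < c s ∧ 0 ≤ R ∧ R < Xs (n + 1 - s) ∧
          N = G c Xs n s 0 + d * Xs (n + 1 - s) + R := by
        refine ⟨(N - G c Xs n s 0) / Xs (n + 1 - s), (N - G c Xs n s 0) % Xs (n + 1 - s),
          Int.ediv_nonneg (by linarith) (le_of_lt hXp), ?_, Int.emod_nonneg _ (ne_of_gt hXp),
          Int.emod_lt_of_pos _ hXp, ?_⟩
        · by_contra hcon
          push_neg at hcon
          have h5 : c s * Xs (n + 1 - s) ≤ (N - G c Xs n s 0) / Xs (n + 1 - s) * Xs (n + 1 - s) :=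
            mul_le_mul_of_nonneg_right hcon (le_of_lt hXp)
          have h6 := Int.mul_ediv_add_emod (N - G c Xs n s 0) (Xs (n + 1 - s))
          have h7 := Int.emod_nonneg (N - G c Xs n s 0) (ne_of_gt hXp)
          have h8 := mul_comm ((N - G c Xs n s 0) / Xs (n + 1 - s)) (Xs (n + 1 - s))
          have h9 : N - G c Xs n s 0 < c s * Xs (n + 1 - s) := by linarith
          linarith [h5, h6, h7, h9, h8 ▸ h5]
        · have h6 := Int.mul_ediv_add_emod (N - G c Xs n s 0) (Xs (n + 1 - s))
          linarith [mul_comm ((N - G c Xs n s 0) / Xs (n + 1 - s)) (Xs (n + 1 - s)),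
            mul_comm (Xs (n + 1 - s)) ((N - G c Xs n s 0) / Xs (n + 1 - s))]
      obtain ⟨d, R, hd0, hdlt, hR0, hRlt, hsum⟩ := hdR
      obtain ⟨t, htSR, htsupp, htval⟩ := (ih (n - s) (by omega)).2.2 R hR0
        (by rw [show n - s + 1 = n + 1 - s from by omega]; exact hRlt)
      refine ⟨fun i => if i < s then (c i).toNat else if i = s then d.toNat else t (i - s),
        ?_, ?_, ?_⟩
      · refine .chunk _ s 0 hs1 (by omega) (fun i hi his => ?_) ?_ (fun i hi hi0 => by omega) ?_
        · simp only [if_pos his]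
          exact Int.toNat_of_nonneg (le_of_lt (hc i hi (by omega)))
        · show ((if s < s then (c s).toNat else if s = s then d.toNat else t (s - s) : ℕ) : ℤ) < c s
          rw [if_neg (lt_irrefl s), if_pos rfl, Int.toNat_of_nonneg hd0]
          exact hdlt
        · refine isSR_ext htSR _ (fun i hi => ?_)
          simp only [Nat.add_zero]
          rw [if_neg (by omega), if_neg (by omega), show s + i - s = i from by omega]
      · intro j hj
        show (if j < s then (c j).toNat else if j = s then d.toNat else t (j - s)) = 0
        rw [if_neg (by omega), if_neg (by omega)]
        exact htsupp (j - s) (by omega)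
      · rw [val_split Xs hsn _, sum_head Xs n _ hs1]
        have e1 : ∑ i ∈ Finset.Ico 1 s,
            ((if i < s then (c i).toNat else if i = s then d.toNat else t (i - s) : ℕ) : ℤ)
              * Xs (n + 1 - i)
            = ∑ i ∈ Finset.Ico 1 s, c i * Xs (n + 1 - i) := by
          refine Finset.sum_congr rfl (fun i hi => ?_)
          simp only [Finset.mem_Ico] at hi
          simp only [if_pos hi.2]
          rw [Int.toNat_of_nonneg (le_of_lt (hc i hi.1 (by omega)))]
        have e2 : ((if s < s then (c s).toNat else if s = s then d.toNat else t (s - s) : ℕ) : ℤ)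
            = d := by
          simp only [lt_irrefl, if_neg, if_pos rfl]
          exact Int.toNat_of_nonneg hd0
        have e3 : val Xs (n - s)
            (fun x => if s + x < s then (c (s + x)).toNat else if s + x = s then d.toNat
              else t (s + x - s)) = R := by
          rw [← htval]
          refine val_congr (fun i hi => ?_)
          rw [if_neg (by omega), if_neg (by omega), show s + i - s = i from by omega]
        rw [e1, e2, e3, hsum, G_zero]


lemma resum {ι : Type*} [Fintype ι] (c : ℕ → ℤ) (d : ℕ → ℤ) (w : ℕ → ι → ℤ)
    (m kk : ℕ) (hkk : 1 ≤ kk) (hm : kk ≤ m) (dm : ℤ) :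
    ∑ i ∈ Finset.Icc 1 m, (d i + (if i = m - kk then dm else 0)
        - (if m - kk < i ∧ i ≤ m then dm * c (i - (m - kk)) else 0)) • w i
      = (∑ i ∈ Finset.Icc 1 m, d i • w i) + (if 1 ≤ m - kk then dm • w (m - kk) else 0)
        - ∑ l ∈ Finset.Icc 1 kk, (dm * c l) • w (m - kk + l) := by
  simp only [sub_smul, add_smul]
  rw [Finset.sum_sub_distrib, Finset.sum_add_distrib]
  have hmid : ∑ i ∈ Finset.Icc 1 m, (if i = m - kk then dm else 0) • w i
      = (if 1 ≤ m - kk then dm • w (m - kk) else 0) := by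
    have h2 : ∀ i ∈ Finset.Icc 1 m, (if i = m - kk then dm else 0) • w i
        = (if i = m - kk then dm • w i else 0) := by
      intro i _; split <;> simp
    rw [Finset.sum_congr rfl h2]
    rw [Finset.sum_ite_eq' (Finset.Icc 1 m) (m - kk) (fun i => dm • w i)]
    by_cases h : 1 ≤ m - kk
    · rw [if_pos (by simp only [Finset.mem_Icc]; omega), if_pos h]
    · rw [if_neg (by simp only [Finset.mem_Icc]; omega), if_neg h]
  have hlast : ∑ i ∈ Finset.Icc 1 m, (if m - kk < i ∧ i ≤ m then dm * c (i - (m - kk)) else 0) • w i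
      = ∑ l ∈ Finset.Icc 1 kk, (dm * c l) • w (m - kk + l) := by
    have h2 : ∀ i ∈ Finset.Icc 1 m, (if m - kk < i ∧ i ≤ m then dm * c (i - (m - kk)) else 0) • w i
        = (if m - kk < i ∧ i ≤ m then (dm * c (i - (m - kk))) • w i else 0) := by
      intro i _; split <;> simp
    rw [Finset.sum_congr rfl h2]
    rw [icc_eq_ioc, ← Finset.sum_Ioc_consecutive _ (Nat.zero_le (m - kk)) (by omega : m - kk ≤ m)]
    have h1 : ∑ i ∈ Finset.Ioc 0 (m - kk),
        (if m - kk < i ∧ i ≤ m then (dm * c (i - (m - kk))) • w i else 0) = 0 := by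
      refine Finset.sum_eq_zero (fun i hi => ?_)
      simp only [Finset.mem_Ioc] at hi
      rw [if_neg (by omega)]
    rw [h1, zero_add]
    refine Finset.sum_nbij' (fun i => i - (m - kk)) (fun l => m - kk + l) ?_ ?_ ?_ ?_ ?_
    · intro i hi; simp only [Finset.mem_Ioc, Finset.mem_Icc] at *; omega
    · intro l hl; simp only [Finset.mem_Ioc, Finset.mem_Icc] at *; omega
    · intro i hi; simp only [Finset.mem_Ioc] at *; omega
    · intro l hl; simp only [Finset.mem_Icc] at *; omega
    · intro i hi
      simp only [Finset.mem_Ioc] at hi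
      rw [if_pos (by omega), show m - kk + (i - (m - kk)) = i from by omega]
  rw [hmid, hlast]


lemma resum' (c : ℕ → ℤ) (d : ℕ → ℤ) (w : ℕ → ℤ)
    (m kk : ℕ) (hkk : 1 ≤ kk) (hm : kk ≤ m) (dm : ℤ) :
    ∑ i ∈ Finset.Icc 1 m, (d i + (if i = m - kk then dm else 0)
        - (if m - kk < i ∧ i ≤ m then dm * c (i - (m - kk)) else 0)) * w i
      = (∑ i ∈ Finset.Icc 1 m, d i * w i) + (if 1 ≤ m - kk then dm * w (m - kk) else 0)
        - ∑ l ∈ Finset.Icc 1 kk, (dm * c l) * w (m - kk + l) := by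
  simp only [sub_mul, add_mul]
  rw [Finset.sum_sub_distrib, Finset.sum_add_distrib]
  have hmid : ∑ i ∈ Finset.Icc 1 m, (if i = m - kk then dm else 0) * w i
      = (if 1 ≤ m - kk then dm * w (m - kk) else 0) := by
    have h2 : ∀ i ∈ Finset.Icc 1 m, (if i = m - kk then dm else 0) * w i
        = (if i = m - kk then dm * w i else 0) := by
      intro i _; split <;> simp
    rw [Finset.sum_congr rfl h2]
    rw [Finset.sum_ite_eq' (Finset.Icc 1 m) (m - kk) (fun i => dm * w i)]
    by_cases h : 1 ≤ m - kk
    · rw [if_pos (by simp only [Finset.mem_Icc]; omega), if_pos h]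
    · rw [if_neg (by simp only [Finset.mem_Icc]; omega), if_neg h]
  have hlast : ∑ i ∈ Finset.Icc 1 m, (if m - kk < i ∧ i ≤ m then dm * c (i - (m - kk)) else 0) * w i
      = ∑ l ∈ Finset.Icc 1 kk, (dm * c l) * w (m - kk + l) := by
    have h2 : ∀ i ∈ Finset.Icc 1 m, (if m - kk < i ∧ i ≤ m then dm * c (i - (m - kk)) else 0) * w i
        = (if m - kk < i ∧ i ≤ m then (dm * c (i - (m - kk))) * w i else 0) := by
      intro i _; split <;> simp
    rw [Finset.sum_congr rfl h2]
    rw [icc_eq_ioc, ← Finset.sum_Ioc_consecutive _ (Nat.zero_le (m - kk)) (by omega : m - kk ≤ m)]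
    have h1 : ∑ i ∈ Finset.Ioc 0 (m - kk),
        (if m - kk < i ∧ i ≤ m then (dm * c (i - (m - kk))) * w i else 0) = 0 := by
      refine Finset.sum_eq_zero (fun i hi => ?_)
      simp only [Finset.mem_Ioc] at hi
      rw [if_neg (by omega)]
    rw [h1, zero_add]
    refine Finset.sum_nbij' (fun i => i - (m - kk)) (fun l => m - kk + l) ?_ ?_ ?_ ?_ ?_
    · intro i hi; simp only [Finset.mem_Ioc, Finset.mem_Icc] at *; omega
    · intro l hl; simp only [Finset.mem_Ioc, Finset.mem_Icc] at *; omega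
    · intro i hi; simp only [Finset.mem_Ioc] at *; omega
    · intro l hl; simp only [Finset.mem_Icc] at *; omega
    · intro i hi
      simp only [Finset.mem_Ioc] at hi
      rw [if_pos (by omega), show m - kk + (i - (m - kk)) = i from by omega]
  rw [hmid, hlast]

lemma sum_drop_top {α : Type*} [AddCommGroup α] (f : ℕ → α) {m : ℕ} (hm : 1 ≤ m) :
    ∑ i ∈ Finset.Icc 1 m, f i = (∑ i ∈ Finset.Icc 1 (m - 1), f i) + f m := by
  obtain ⟨m', rfl⟩ : ∃ m', m = m' + 1 := ⟨m - 1, by omega⟩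
  rw [← Finset.Ico_add_one_right_eq_Icc, Finset.sum_Ico_succ_top (by omega), Finset.Ico_add_one_right_eq_Icc]
  simp


lemma vec_dvd {k : ℕ} {c Xs : ℕ → ℤ} {V : ℤ → Fin (k - 1) → ℤ} (hk : 2 ≤ k)
    (hck : c k = 1)
    (hXsrec : ∀ n, k < n → Xs n = ∑ i ∈ Finset.Icc 1 k, c i * Xs (n - i))
    (hV0 : V 0 = 0)
    (hVe : ∀ i : ℕ, 1 ≤ i → i ≤ k - 1 →
      V (-(i : ℤ)) = fun j : Fin (k - 1) => if (j : ℕ) + 1 = i then 1 else 0)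
    (hVrec : ∀ n : ℤ, V n = ∑ l ∈ Finset.Icc 1 k, c l • V (n - (l : ℤ))) (n : ℕ) :
    ∀ m, m ≤ n → ∀ d : ℕ → ℤ, (∑ i ∈ Finset.Icc 1 m, d i • V (-(i : ℤ))) = 0 →
      Xs (n + 1) ∣ ∑ i ∈ Finset.Icc 1 m, d i * Xs (n + 1 - i) := by
  intro m
  induction m using Nat.strong_induction_on with
  | _ m ihm =>
  intro hmn d hvec
  rcases le_or_gt m (k - 1) with hmk | hmk
  · -- linear independence regime
    have hzero : ∀ i0, 1 ≤ i0 → i0 ≤ m → d i0 = 0 := by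
      intro i0 h1 h2
      have hj : i0 - 1 < k - 1 := by omega
      have h0 := congrFun hvec ⟨i0 - 1, hj⟩
      rw [Finset.sum_apply] at h0
      simp only [Pi.zero_apply] at h0
      have hterm : ∀ i ∈ Finset.Icc 1 m, (d i • V (-(i : ℤ))) ⟨i0 - 1, hj⟩
          = if i0 = i then d i else 0 := by
        intro i hi
        simp only [Finset.mem_Icc] at hi
        rw [hVe i hi.1 (by omega)]
        simp only [Pi.smul_apply, smul_eq_mul]
        have hiff : ((⟨i0 - 1, hj⟩ : Fin (k - 1)) : ℕ) + 1 = i ↔ i0 = i := by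
          simp only []
          omega
        by_cases hcase : i0 = i
        · rw [if_pos (hiff.mpr hcase), if_pos hcase, mul_one]
        · rw [if_neg (fun hcon => hcase (hiff.mp hcon)), if_neg hcase, mul_zero]
      rw [Finset.sum_congr rfl hterm, Finset.sum_ite_eq (Finset.Icc 1 m) i0 (fun i => d i),
        if_pos (by simp only [Finset.mem_Icc]; omega)] at h0
      exact h0
    have : ∑ i ∈ Finset.Icc 1 m, d i * Xs (n + 1 - i) = 0 := by
      refine Finset.sum_eq_zero (fun i hi => ?_)
      simp only [Finset.mem_Icc] at hi
      rw [hzero i hi.1 hi.2, zero_mul]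
    rw [this]
    exact dvd_zero _
  · -- recurrence regime : m ≥ k
    have hkm : k ≤ m := by omega
    set d' : ℕ → ℤ := fun i => d i + (if i = m - k then d m else 0)
        - (if m - k < i ∧ i ≤ m then d m * c (i - (m - k)) else 0) with hd'
    have hd'm : d' m = 0 := by
      rw [hd']
      simp only []
      rw [if_neg (by omega), if_pos (by omega), show m - (m - k) = k from by omega, hck]
      ring
    -- the vector relation
    have hVm : (if 1 ≤ m - k then (d m) • V (-((m - k : ℕ) : ℤ)) else 0)
        = (d m) • V (-((m - k : ℕ) : ℤ)) := by
      rcases Nat.eq_zero_or_pos (m - k) with h | h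
      · rw [h, if_neg (by omega)]
        simp only [Nat.cast_zero, neg_zero, hV0, smul_zero]
      · rw [if_pos (show 1 ≤ m - k by omega)]
    have hVsum : ∑ l ∈ Finset.Icc 1 k, ((d m) * c l) • V (-(((m - k + l : ℕ)) : ℤ))
        = (d m) • V (-((m - k : ℕ) : ℤ)) := by
      have h1 : ∀ l ∈ Finset.Icc 1 k, ((d m) * c l) • V (-(((m - k + l : ℕ)) : ℤ))
          = (d m) • (c l • V (-((m - k : ℕ) : ℤ) - (l : ℤ))) := by
        intro l hl
        rw [mul_smul]
        congr 2
        push_cast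
        ring
      rw [Finset.sum_congr rfl h1, ← Finset.smul_sum, ← hVrec (-((m - k : ℕ) : ℤ))]
    have hveceq : ∑ i ∈ Finset.Icc 1 m, d' i • V (-(i : ℤ)) = 0 := by
      rw [hd']
      rw [resum c d (fun i => V (-(i : ℤ))) m k (by omega) hkm (d m)]
      rw [hVm, hVsum, hvec]
      ring
    have hvec' : ∑ i ∈ Finset.Icc 1 (m - 1), d' i • V (-(i : ℤ)) = 0 := by
      have := sum_drop_top (fun i => d' i • V (-(i : ℤ))) (show 1 ≤ m from by omega)
      rw [hveceq, hd'm, zero_smul, add_zero] at this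
      exact this.symm
    have hdvd' := ihm (m - 1) (by omega) (by omega) d' hvec'
    -- scalar computation
    have hXsum : ∑ l ∈ Finset.Icc 1 k, ((d m) * c l) * Xs (n + 1 - (m - k + l))
        = (d m) * Xs (n + 1 - (m - k)) := by
      have h1 : ∀ l ∈ Finset.Icc 1 k, ((d m) * c l) * Xs (n + 1 - (m - k + l))
          = (d m) * (c l * Xs ((n + 1 - (m - k)) - l)) := by
        intro l hl
        simp only [Finset.mem_Icc] at hl
        rw [show n + 1 - (m - k + l) = n + 1 - (m - k) - l from by omega]
        ring
      rw [Finset.sum_congr rfl h1, ← Finset.mul_sum, ← hXsrec (n + 1 - (m - k)) (by omega)]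
    have hscal : ∑ i ∈ Finset.Icc 1 m, d' i * Xs (n + 1 - i)
        = (∑ i ∈ Finset.Icc 1 m, d i * Xs (n + 1 - i))
          + (if 1 ≤ m - k then (d m) * Xs (n + 1 - (m - k)) else 0)
          - (d m) * Xs (n + 1 - (m - k)) := by
      rw [hd']
      rw [resum' c d (fun i => Xs (n + 1 - i)) m k (by omega) hkm (d m)]
      rw [hXsum]
    have hscal' : ∑ i ∈ Finset.Icc 1 m, d' i * Xs (n + 1 - i)
        = ∑ i ∈ Finset.Icc 1 (m - 1), d' i * Xs (n + 1 - i) := by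
      have := sum_drop_top (fun i => d' i * Xs (n + 1 - i)) (show 1 ≤ m from by omega)
      rw [this, hd'm, zero_mul, add_zero]
    rcases Nat.eq_zero_or_pos (m - k) with hzero | hpos
    · -- m = k : the relation shifts by Xs (n+1)
      have : ∑ i ∈ Finset.Icc 1 m, d i * Xs (n + 1 - i)
          = (∑ i ∈ Finset.Icc 1 (m - 1), d' i * Xs (n + 1 - i)) + (d m) * Xs (n + 1) := by
        rw [← hscal', hscal, if_neg (by omega), hzero]
        simp only [Nat.sub_zero]
        ring
      rw [this]
      exact dvd_add hdvd' (Dvd.dvd.mul_left dvd_rfl (d m))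
    · have : ∑ i ∈ Finset.Icc 1 m, d i * Xs (n + 1 - i)
          = ∑ i ∈ Finset.Icc 1 (m - 1), d' i * Xs (n + 1 - i) := by
        rw [← hscal', hscal, if_pos (show 1 ≤ m - k by omega)]
        ring
      rw [this]
      exact hdvd'

end SRaux

/-- The set D_n of vectors representable by a c-satisfying representation supported on
indices 1 through n has cardinality X^s_{n+1}, the (n+1)-st term of the scalar PLRS. -/
theorem card_Dn
    (k : ℕ) (hk : 2 ≤ k) (c : ℕ → ℤ)
    (hc1 : 0 < c 1)
    (hdec : ∀ i, 1 ≤ i → i < k → c (i + 1) ≤ c i) (hck : c k = 1)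
    (Xs : ℕ → ℤ) (hXs1 : Xs 1 = 1)
    (hXsinit : ∀ n, 2 ≤ n → n ≤ k →
      Xs n = (∑ i ∈ Finset.Icc 1 (n - 1), c i * Xs (n - i)) + 1)
    (hXsrec : ∀ n, k < n → Xs n = ∑ i ∈ Finset.Icc 1 k, c i * Xs (n - i))
    (V : ℤ → Fin (k - 1) → ℤ)
    (hV0 : V 0 = 0)
    (hVe : ∀ i : ℕ, 1 ≤ i → i ≤ k - 1 →
      V (-(i : ℤ)) = fun j : Fin (k - 1) => if (j : ℕ) + 1 = i then 1 else 0)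
    (hVrec : ∀ n : ℤ, V n = ∑ l ∈ Finset.Icc 1 k, c l • V (n - (l : ℤ))) :
    ∀ n : ℕ,
      (({v : Fin (k - 1) → ℤ | ∃ a : ℕ → ℕ, IsSR k c a ∧ (∀ j, n < j → a j = 0) ∧
          v = ∑ i ∈ Finset.Icc 1 n, (a i : ℤ) • V (-(i : ℤ))}.ncard : ℤ))
        = Xs (n + 1) := by
  classical
  have hcpos : ∀ i, 1 ≤ i → i ≤ k → 0 < c i := SRaux.c_pos hdec hck
  have hXpos : ∀ n, 1 ≤ n → 0 < Xs n := SRaux.Xs_pos hk hcpos hXs1 hXsinit hXsrec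
  have hmaster := SRaux.master hk hcpos hXs1 hXpos hXsinit hXsrec
  have hdvd := SRaux.vec_dvd hk hck hXsrec hV0 hVe hVrec
  intro n
  have hXp : 0 < Xs (n + 1) := hXpos _ (by omega)
  have hrep0 : ∀ N : ℤ, ∃ a : ℕ → ℕ, 0 ≤ N → N < Xs (n + 1) →
      IsSR k c a ∧ (∀ j, n < j → a j = 0) ∧ SRaux.val Xs n a = N := by
    intro N
    by_cases hcase : 0 ≤ N ∧ N < Xs (n + 1)
    · obtain ⟨a, h1, h2, h3⟩ := (hmaster n).2.2 N hcase.1 hcase.2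
      exact ⟨a, fun _ _ => ⟨h1, h2, h3⟩⟩
    · exact ⟨fun _ => 0, fun hh1 hh2 => absurd ⟨hh1, hh2⟩ hcase⟩
  choose rep hrep using hrep0
  have himg : {v : Fin (k - 1) → ℤ | ∃ a : ℕ → ℕ, IsSR k c a ∧ (∀ j, n < j → a j = 0) ∧
          v = ∑ i ∈ Finset.Icc 1 n, (a i : ℤ) • V (-(i : ℤ))}
      = (fun N => ∑ i ∈ Finset.Icc 1 n, ((rep N) i : ℤ) • V (-(i : ℤ)))
          '' (Set.Ico 0 (Xs (n + 1))) := by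
    apply Set.Subset.antisymm
    · rintro v ⟨a, hSR, hsupp, rfl⟩
      have hv0 : 0 ≤ SRaux.val Xs n a := SRaux.val_nonneg hXpos n a
      have hv1 : SRaux.val Xs n a ≤ Xs (n + 1) - 1 := (hmaster n).1 a hSR hsupp
      refine ⟨SRaux.val Xs n a, ⟨hv0, by linarith⟩, ?_⟩
      obtain ⟨hSRr, hsuppr, hvalr⟩ := hrep (SRaux.val Xs n a) hv0 (by linarith)
      have hag := (hmaster n).2.1 _ _ hSRr hSR hsuppr hsupp hvalr
      refine Finset.sum_congr rfl (fun i hi => ?_)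
      simp only [Finset.mem_Icc] at hi
      rw [hag i hi.1]
    · rintro v ⟨N, ⟨h1, h2⟩, rfl⟩
      obtain ⟨hSRr, hsuppr, hvalr⟩ := hrep N h1 h2
      exact ⟨rep N, hSRr, hsuppr, rfl⟩
  have hinj : Set.InjOn (fun N => ∑ i ∈ Finset.Icc 1 n, ((rep N) i : ℤ) • V (-(i : ℤ)))
      (Set.Ico 0 (Xs (n + 1))) := by
    rintro N ⟨hN1, hN2⟩ M ⟨hM1, hM2⟩ heq
    simp only [] at heq
    obtain ⟨hSRN, hsN, hvN⟩ := hrep N hN1 hN2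
    obtain ⟨hSRM, hsM, hvM⟩ := hrep M hM1 hM2
    have hd0 : ∑ i ∈ Finset.Icc 1 n, (((rep N) i : ℤ) - ((rep M) i : ℤ)) • V (-(i : ℤ)) = 0 := by
      simp only [sub_smul]
      rw [Finset.sum_sub_distrib, heq, sub_self]
    have hdv := hdvd n n le_rfl (fun i => ((rep N) i : ℤ) - ((rep M) i : ℤ)) hd0
    have hsum : ∑ i ∈ Finset.Icc 1 n, (((rep N) i : ℤ) - ((rep M) i : ℤ)) * Xs (n + 1 - i)
        = N - M := by
      simp only [sub_mul]
      rw [Finset.sum_sub_distrib]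
      have e1 : SRaux.val Xs n (rep N) = ∑ i ∈ Finset.Icc 1 n, ((rep N) i : ℤ) * Xs (n + 1 - i) :=
        rfl
      have e2 : SRaux.val Xs n (rep M) = ∑ i ∈ Finset.Icc 1 n, ((rep M) i : ℤ) * Xs (n + 1 - i) :=
        rfl
      rw [← e1, ← e2, hvN, hvM]
    rw [hsum] at hdv
    obtain ⟨t, ht⟩ := hdv
    have ht1 : t < 1 := by nlinarith
    have ht2 : -1 < t := by nlinarith
    have ht0 : t = 0 := by omega
    rw [ht0, mul_zero] at ht
    linarith
  rw [himg, Set.ncard_image_of_injOn hinj]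
  rw [show Set.Ico (0 : ℤ) (Xs (n + 1)) = ↑(Finset.Ico (0 : ℤ) (Xs (n + 1)))
      from (Finset.coe_Ico _ _).symm]
  rw [Set.ncard_coe_finset, Int.card_Ico]
  rw [sub_zero, Int.toNat_of_nonneg (le_of_lt hXp)]
end
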